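/- arXiv:1605.02242 — 4 statements merged into one kernel-verified Lean document; each statement's English description precedes it below -/
import Mathlib

section
/- Every non-negative integer square matrix M has a positive power M^t which, up to conjugation by a permutation matrix, is a lower triangular block matrix in which every diagonal block is either a primitive matrix or power bounded (i.e. the entries of all its powers are uniformly bounded). -/
open Filter Matrix

noncomputable section

def l1 {ι : Type*} [Fintype ι] (v : ι → ℝ) : ℝ := ∑ i, |v i|

def IsPrimitive {ι : Type*} [Fintype ι] [DecidableEq ι] (M : Matrix ι ι ℝ) : Prop :=
  ∃ k : ℕ, 0 < k ∧ ∀ i j, 0 < (M ^ k) i j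

def IsPowerBounded {ι : Type*} [Fintype ι] [DecidableEq ι] (M : Matrix ι ι ℝ) : Prop :=
  ∃ C : ℝ, ∀ t : ℕ, 1 ≤ t → ∀ i j, (M ^ t) i j ≤ C

def diagBlock {ι : Type*} {m : ℕ} (M : Matrix ι ι ℝ) (b : ι → Fin m) (p : Fin m) :
    Matrix {i // b i = p} {i // b i = p} ℝ :=
  Matrix.of fun i j => M i.1 j.1

/-- `M` is a lower triangular block matrix (for the block structure given by `b`, where
blocks are ordered by the order of `Fin m`; an arbitrary function `b` accounts for
conjugation by a permutation) in which every diagonal block is primitive or power bounded. -/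
def IsPBFrobenius {ι : Type*} [Fintype ι] [DecidableEq ι] (M : Matrix ι ι ℝ) : Prop :=
  ∃ (m : ℕ) (b : ι → Fin m),
    (∀ i j, b i < b j → M i j = 0) ∧
    ∀ p : Fin m, _root_.IsPrimitive (diagBlock M b p) ∨ IsPowerBounded (diagBlock M b p)

/-- Primitive Frobenius form: lower triangular block matrix, every diagonal block
primitive (1×1 blocks with entry 1 are primitive; 1×1 blocks with entry 0 are covered
by the second disjunct). -/
def IsPrimFrobenius {ι : Type*} [Fintype ι] [DecidableEq ι] (M : Matrix ι ι ℝ) : Prop :=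
  ∃ (m : ℕ) (b : ι → Fin m),
    (∀ i j, b i < b j → M i j = 0) ∧
    ∀ p : Fin m, _root_.IsPrimitive (diagBlock M b p) ∨
      (∀ i j, b i = p → b j = p → i = j ∧ M i j = 0)

/-- No coordinate vector is mapped by a positive power of `M` to itself or to `0`. -/
def MatExpanding {ι : Type*} [Fintype ι] [DecidableEq ι] (M : Matrix ι ι ℝ) : Prop :=
  ¬ ∃ (i : ι) (k : ℕ), 0 < k ∧
      ((M ^ k).mulVec (Pi.single i 1) = Pi.single i 1 ∨ (M ^ k).mulVec (Pi.single i 1) = 0)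

set_option linter.unusedSectionVars false

namespace PBF

variable {n : ℕ} {M : Matrix (Fin n) (Fin n) ℝ}

lemma powEntryNonneg (hM : ∀ i j, 0 ≤ M i j) : ∀ (k : ℕ) (i j : Fin n), 0 ≤ (M ^ k) i j := by
  intro k
  induction k with
  | zero =>
    intro i j
    by_cases h : i = j <;> simp [pow_zero, Matrix.one_apply, h]
  | succ k ih =>
    intro i j
    rw [pow_succ, Matrix.mul_apply]
    exact Finset.sum_nonneg fun v _ => mul_nonneg (ih i v) (hM v j)

lemma powAddPos (hM : ∀ i j, 0 ≤ M i j) {a b : ℕ} {i v j : Fin n}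
    (h1 : 0 < (M ^ a) i v) (h2 : 0 < (M ^ b) v j) : 0 < (M ^ (a + b)) i j := by
  rw [pow_add, Matrix.mul_apply]
  exact Finset.sum_pos'
    (fun x _ => mul_nonneg (powEntryNonneg hM a i x) (powEntryNonneg hM b x j))
    ⟨v, Finset.mem_univ v, mul_pos h1 h2⟩

lemma existsMid (hM : ∀ i j, 0 ≤ M i j) {a : ℕ} {i j : Fin n} (h : 0 < (M ^ (a + 1)) i j) :
    ∃ v, 0 < (M ^ a) i v ∧ 0 < M v j := by
  rw [pow_succ, Matrix.mul_apply] at h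
  by_contra hc
  push_neg at hc
  have hz : ∀ v ∈ Finset.univ, (M ^ a) i v * M v j = 0 := by
    intro v _
    rcases lt_or_eq_of_le (powEntryNonneg hM a i v) with hp | hp
    · have h2 : M v j = 0 := le_antisymm (hc v hp) (hM v j)
      rw [h2, mul_zero]
    · rw [← hp, zero_mul]
  rw [Finset.sum_eq_zero hz] at h
  exact lt_irrefl 0 h


lemma walkOfPow (hM : ∀ i j, 0 ≤ M i j) :
    ∀ (k : ℕ) (i j : Fin n), 0 < (M ^ k) i j →
      ∃ f : ℕ → Fin n, f 0 = i ∧ f k = j ∧ ∀ t, t < k → 0 < M (f t) (f (t + 1)) := by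
  intro k
  induction k with
  | zero =>
    intro i j h
    have hij : i = j := by
      by_contra hne
      rw [pow_zero, Matrix.one_apply_ne hne] at h
      exact lt_irrefl 0 h
    exact ⟨fun _ => i, rfl, hij ▸ rfl, fun t ht => absurd ht (Nat.not_lt_zero t)⟩
  | succ k ih =>
    intro i j h
    obtain ⟨v, h1, h2⟩ := existsMid hM h
    obtain ⟨f, hf0, hfk, hfs⟩ := ih i v h1
    refine ⟨fun t => if t ≤ k then f t else j, by simp [hf0], by simp, ?_⟩
    intro t ht
    rcases Nat.lt_or_ge t k with h' | h'
    · simp only [if_pos (le_of_lt h'), if_pos (Nat.succ_le_of_lt h')]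
      exact hfs t h'
    · have htk : t = k := le_antisymm (Nat.lt_succ_iff.mp ht) h'
      subst htk
      simp only [if_pos (le_refl t), if_neg (by omega : ¬ t + 1 ≤ t)]
      rw [hfk]
      exact h2

lemma powOfSeg (hM : ∀ i j, 0 ≤ M i j) {k : ℕ} {f : ℕ → Fin n}
    (hf : ∀ t, t < k → 0 < M (f t) (f (t + 1))) :
    ∀ (c a : ℕ), a + c ≤ k → 0 < (M ^ c) (f a) (f (a + c)) := by
  intro c
  induction c with
  | zero =>
    intro a _
    simp [pow_zero, Matrix.one_apply_eq]
  | succ c ih =>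
    intro a hak
    have h1 := ih a (by omega)
    have h2 : 0 < (M ^ 1) (f (a + c)) (f (a + c + 1)) := by
      rw [pow_one]; exact hf (a + c) (by omega)
    exact powAddPos hM h1 h2

lemma shortLoop (hM : ∀ i j, 0 ≤ M i j) :
    ∀ (k : ℕ), 0 < k → ∀ i : Fin n, 0 < (M ^ k) i i →
      ∃ m, 0 < m ∧ m ≤ n ∧ 0 < (M ^ m) i i := by
  intro k
  induction k using Nat.strong_induction_on with
  | _ k ih =>
    intro hk i h
    rcases le_or_gt k n with hkn | hkn
    · exact ⟨k, hk, hkn, h⟩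
    · obtain ⟨f, hf0, hfk, hfs⟩ := walkOfPow hM k i i h
      have hcard : Fintype.card (Fin n) < Fintype.card (Fin (n + 1)) := by simp
      obtain ⟨a, b, hab, hfab⟩ :=
        Fintype.exists_ne_map_eq_of_card_lt (fun t : Fin (n + 1) => f (t : ℕ)) hcard
      have key : ∀ A B : ℕ, A < B → B ≤ n → f A = f B →
          ∃ m, 0 < m ∧ m ≤ n ∧ 0 < (M ^ m) i i := by
        intro A B hAB hBn hfAB
        have h1 : 0 < (M ^ A) i (f A) := by
          have := powOfSeg hM hfs A 0 (by omega)
          simpa [hf0] using this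
        have h2 : 0 < (M ^ (k - B)) (f B) i := by
          have := powOfSeg hM hfs (k - B) B (by omega)
          rw [show B + (k - B) = k by omega, hfk] at this
          exact this
        rw [hfAB] at h1
        exact ih (A + (k - B)) (by omega) (by omega) i (powAddPos hM h1 h2)
      rcases lt_or_gt_of_ne hab with h' | h'
      · exact key a b h' (by omega) hfab
      · exact key b a h' (by omega) hfab.symm


lemma semigroupLemma (S : Set ℕ) (hadd : ∀ a ∈ S, ∀ b ∈ S, a + b ∈ S)
    {s0 : ℕ} (hs0 : s0 ∈ S) (hs0p : 0 < s0) :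
    ∃ g F : ℕ, 0 < g ∧ (∀ s ∈ S, g ∣ s) ∧ ∀ m : ℕ, g ∣ m → F ≤ m → m = 0 ∨ m ∈ S := by
  have hmul : ∀ (q s : ℕ), 0 < q → s ∈ S → q * s ∈ S := by
    intro q
    induction q with
    | zero => intro s h0 _; exact absurd h0 (lt_irrefl 0)
    | succ q ih =>
      intro s hq hs
      rcases Nat.eq_zero_or_pos q with rfl | hqp
      · simpa using hs
      · have h := hadd _ (ih s hqp hs) _ hs
        rwa [Nat.succ_mul]
  set H := AddSubgroup.closure ((fun s : ℕ => (s : ℤ)) '' S) with hH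
  have hmemH : ∀ s ∈ S, (s : ℤ) ∈ H := fun s hs => AddSubgroup.subset_closure ⟨s, hs, rfl⟩
  obtain ⟨g0, hg0⟩ := Int.subgroup_cyclic H
  have hdvd : ∀ s ∈ S, g0 ∣ (s : ℤ) := by
    intro s hs
    have h := hmemH s hs
    rw [hg0, AddSubgroup.mem_closure_singleton] at h
    obtain ⟨z, hz⟩ := h
    exact ⟨z, by rw [← hz]; simp [zsmul_eq_mul, mul_comm]⟩
  have hg0ne : g0 ≠ 0 := by
    intro h
    have h2 := hdvd s0 hs0
    rw [h, zero_dvd_iff] at h2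
    have : s0 = 0 := by exact_mod_cast h2
    omega
  have hg0H : g0 ∈ H := by
    rw [hg0]
    exact AddSubgroup.mem_closure_singleton.mpr ⟨1, one_zsmul g0⟩
  have hor : ∀ u v : ℕ, (u = 0 ∨ u ∈ S) → (v = 0 ∨ v ∈ S) → (u + v = 0 ∨ u + v ∈ S) := by
    rintro u v (rfl | hu) (rfl | hv)
    · exact Or.inl rfl
    · exact Or.inr (by simpa using hv)
    · exact Or.inr (by simpa using hu)
    · exact Or.inr (hadd u hu v hv)
  have hrep : ∀ a : ℤ, a ∈ H →
      ∃ x y : ℕ, (x = 0 ∨ x ∈ S) ∧ (y = 0 ∨ y ∈ S) ∧ a = (x : ℤ) - (y : ℤ) := by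
    intro a ha
    refine AddSubgroup.closure_induction ?_ ?_ ?_ ?_ ha
    · rintro w ⟨s, hs, rfl⟩
      exact ⟨s, 0, Or.inr hs, Or.inl rfl, by simp⟩
    · exact ⟨0, 0, Or.inl rfl, Or.inl rfl, by simp⟩
    · rintro w1 w2 _ _ ⟨x1, y1, hx1, hy1, rfl⟩ ⟨x2, y2, hx2, hy2, rfl⟩
      exact ⟨x1 + x2, y1 + y2, hor _ _ hx1 hx2, hor _ _ hy1 hy2, by push_cast; ring⟩
    · rintro w _ ⟨x1, y1, hx1, hy1, rfl⟩
      exact ⟨y1, x1, hy1, hx1, by ring⟩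
  obtain ⟨x0, y0, hx0, hy0, hxy0⟩ := hrep g0 hg0H
  set g := g0.natAbs with hgdef
  have hgpos : 0 < g := Int.natAbs_pos.mpr hg0ne
  have hgdvdS : ∀ s ∈ S, g ∣ s := by
    intro s hs
    have h := Int.natAbs_dvd_natAbs.mpr (hdvd s hs)
    simpa using h
  have hxy : ∃ x y : ℕ, (y = 0 ∨ y ∈ S) ∧ x ∈ S ∧ x = y + g := by
    have hmk : ∀ x y : ℕ, (x = 0 ∨ x ∈ S) → (y = 0 ∨ y ∈ S) → x = y + g →
        ∃ x y : ℕ, (y = 0 ∨ y ∈ S) ∧ x ∈ S ∧ x = y + g := by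
      intro x y hx hy he
      rcases hx with rfl | hx
      · exfalso; omega
      · exact ⟨x, y, hy, hx, he⟩
    rcases Int.natAbs_eq g0 with h | h
    · refine hmk x0 y0 hx0 hy0 ?_
      have h2 : (x0 : ℤ) = (y0 : ℤ) + (g : ℤ) := by rw [hgdef]; omega
      exact_mod_cast h2
    · refine hmk y0 x0 hy0 hx0 ?_
      have h2 : (y0 : ℤ) = (x0 : ℤ) + (g : ℤ) := by rw [hgdef]; omega
      exact_mod_cast h2
  obtain ⟨x, y, hyS, hxS, hxe⟩ := hxy
  have hgy : g ∣ y := by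
    rcases hyS with rfl | hy
    · exact dvd_zero g
    · exact hgdvdS y hy
  obtain ⟨u, hyu⟩ := hgy
  refine ⟨g, g * (u * u + u + 1), hgpos, hgdvdS, ?_⟩
  intro m hgm hFm
  obtain ⟨q, hq⟩ := hgm
  have hq1 : u * u + u + 1 ≤ q := by
    rw [hq] at hFm
    exact Nat.le_of_mul_le_mul_left hFm hgpos
  right
  rcases Nat.eq_zero_or_pos u with rfl | hu
  · have hx : x = g := by omega
    have hmq : m = q * x := by rw [hq, hx]; ring
    rw [hmq]
    exact hmul q x (by omega) hxS
  · have hyp : 0 < y := by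
      have := Nat.mul_pos hgpos hu
      omega
    obtain ⟨a, c, hac, hq2⟩ : ∃ a c : ℕ, a < u ∧ q = u * c + a :=
      ⟨q % u, q / u, Nat.mod_lt q hu, (Nat.div_add_mod q u).symm⟩
    have hcu2 : u ≤ c := by nlinarith
    obtain ⟨k, hk⟩ : ∃ k, c = a + k := ⟨c - a, by omega⟩
    have hky : 0 < k := by omega
    have hm2 : m = a * x + k * y := by
      rw [hq, hq2, hk, hxe, hyu]; ring
    have hyS2 : y ∈ S := by
      rcases hyS with rfl | hy
      · exact absurd hyp (lt_irrefl 0)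
      · exact hy
    have hkyS : k * y ∈ S := hmul k y hky hyS2
    rcases Nat.eq_zero_or_pos a with hz | hap
    · rw [hm2, hz]; simpa using hkyS
    · rw [hm2]
      exact hadd _ (hmul _ x hap hxS) _ hkyS


lemma pairLemma (hM : ∀ i j, 0 ≤ M i j) {i j : Fin n} {l r : ℕ}
    (hl : 0 < l) (hlp : 0 < (M ^ l) i j) (hr : 0 < r) (hrp : 0 < (M ^ r) j i) :
    ∃ B : ℕ, ∀ t, B ≤ t → n.factorial ∣ t →
      (∃ a, 0 < a ∧ 0 < (M ^ (a * t)) i j) → 0 < (M ^ t) i j := by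
  set S : Set ℕ := {k | 0 < k ∧ 0 < (M ^ k) i i} with hS
  have haddS : ∀ a ∈ S, ∀ b ∈ S, a + b ∈ S := by
    rintro a ⟨hap, ha⟩ b ⟨hbp, hb⟩
    exact ⟨by omega, powAddPos hM ha hb⟩
  have hs0 : l + r ∈ S := ⟨by omega, powAddPos hM hlp hrp⟩
  obtain ⟨g, F, hgpos, hgdvd, hF⟩ := semigroupLemma S haddS hs0 (by omega)
  obtain ⟨m0, hm0p, hm0n, hm0⟩ := shortLoop hM (l + r) (by omega) i (powAddPos hM hlp hrp)
  have hgn : g ≤ n := le_trans (Nat.le_of_dvd hm0p (hgdvd m0 ⟨hm0p, hm0⟩)) hm0n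
  refine ⟨l + F, ?_⟩
  rintro t htB hfac ⟨a, hap, hat⟩
  have hgt : g ∣ t := dvd_trans (Nat.dvd_factorial hgpos hgn) hfac
  have htpos : 0 < t := by omega
  have hgat : g ∣ a * t := Dvd.dvd.mul_left hgt a
  have h1 : g ∣ l + r := hgdvd _ hs0
  have h2 : g ∣ a * t + r := hgdvd _ ⟨by positivity, powAddPos hM hat hrp⟩
  have hgr : g ∣ r := (Nat.dvd_add_right hgat).mp h2
  have hgl : g ∣ l := (Nat.dvd_add_iff_left hgr).mpr h1
  have hlt : l ≤ t := by omega
  have hdvdtl : g ∣ t - l := Nat.dvd_sub hgt hgl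
  have hFtl : F ≤ t - l := by omega
  rcases hF (t - l) hdvdtl hFtl with h0 | hmem
  · have hteq : t = l := by omega
    rw [hteq]; exact hlp
  · have h3 := powAddPos hM hmem.2 hlp
    rwa [Nat.sub_add_cancel hlt] at h3

lemma keyT (hM : ∀ i j, 0 ≤ M i j) :
    ∃ T : ℕ, 0 < T ∧ ∀ i j : Fin n,
      (∃ a, 0 < a ∧ 0 < (M ^ (a * T)) i j) → (∃ c, 0 < c ∧ 0 < (M ^ (c * T)) j i) →
        0 < (M ^ T) i j := by
  classical
  have hpair : ∀ p : Fin n × Fin n,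
      ∃ B : ℕ, (∃ l, 0 < l ∧ 0 < (M ^ l) p.1 p.2) → (∃ r', 0 < r' ∧ 0 < (M ^ r') p.2 p.1) →
        ∀ t, B ≤ t → n.factorial ∣ t →
          (∃ a, 0 < a ∧ 0 < (M ^ (a * t)) p.1 p.2) → 0 < (M ^ t) p.1 p.2 := by
    intro p
    by_cases hp : (∃ l, 0 < l ∧ 0 < (M ^ l) p.1 p.2) ∧ (∃ r', 0 < r' ∧ 0 < (M ^ r') p.2 p.1)
    · obtain ⟨⟨l, hl, hlp⟩, ⟨r', hr, hrp⟩⟩ := hp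
      obtain ⟨B, hB⟩ := pairLemma hM hl hlp hr hrp
      exact ⟨B, fun _ _ => hB⟩
    · exact ⟨0, fun h1 h2 => absurd ⟨h1, h2⟩ hp⟩
  choose B hB using hpair
  refine ⟨n.factorial * (1 + ∑ p : Fin n × Fin n, B p), ?_, ?_⟩
  · exact Nat.mul_pos (Nat.factorial_pos n) (by omega)
  · intro i j h1 h2
    set T := n.factorial * (1 + ∑ p : Fin n × Fin n, B p) with hT
    have hTpos : 0 < T := Nat.mul_pos (Nat.factorial_pos n) (by omega)
    have hfac : n.factorial ∣ T := Dvd.intro _ rfl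
    have hBle : B (i, j) ≤ T := by
      calc B (i, j) ≤ ∑ p : Fin n × Fin n, B p :=
            Finset.single_le_sum (fun _ _ => Nat.zero_le _) (Finset.mem_univ (i, j))
        _ ≤ 1 + ∑ p : Fin n × Fin n, B p := by omega
        _ ≤ T := Nat.le_mul_of_pos_left _ (Nat.factorial_pos n)
    obtain ⟨a, hap, hat⟩ := h1
    obtain ⟨c, hcp, hct⟩ := h2
    exact hB (i, j) ⟨a * T, Nat.mul_pos hap hTpos, hat⟩ ⟨c * T, Nat.mul_pos hcp hTpos, hct⟩
      T hBle hfac ⟨a, hap, hat⟩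


end PBF

section Main
open PBF

variable {n : ℕ} (M : Matrix (Fin n) (Fin n) ℝ) (T : ℕ)

/-- positive reach in multiples of `T` steps -/
abbrev PRd (i j : Fin n) : Prop := ∃ k, 0 < k ∧ 0 < (M ^ (k * T)) i j

/-- reach in multiples of `T` steps (including 0 steps) -/
abbrev Rcd (i j : Fin n) : Prop := ∃ k, 0 < (M ^ (k * T)) i j

/-- same block -/
abbrev Ed (i j : Fin n) : Prop := i = j ∨ (PRd M T i j ∧ PRd M T j i)

open Classical in
noncomputable def RSd (i : Fin n) : Finset (Fin n) := Finset.univ.filter (Rcd M T i)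

noncomputable def rkd (i : Fin n) : ℕ := (RSd M T i).card

open Classical in
noncomputable def Cld (i : Fin n) : Finset (Fin n) := Finset.univ.filter (Ed M T i)

lemma mem_Cld_self (i : Fin n) : i ∈ Cld M T i := by
  classical
  simp only [Cld, Finset.mem_filter, Finset.mem_univ, true_and]
  exact Or.inl rfl

noncomputable def repd (i : Fin n) : Fin n := (Cld M T i).min' ⟨i, mem_Cld_self M T i⟩

section lems
variable (hM : ∀ i j, 0 ≤ M i j)
include hM

lemma PRd_trans {i j l : Fin n} (h1 : PRd M T i j) (h2 : PRd M T j l) : PRd M T i l := by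
  obtain ⟨k1, hk1, h1⟩ := h1
  obtain ⟨k2, hk2, h2⟩ := h2
  exact ⟨k1 + k2, by omega, by rw [add_mul]; exact powAddPos hM h1 h2⟩

lemma Rcd_refl (i : Fin n) : Rcd M T i i :=
  ⟨0, by rw [zero_mul, pow_zero]; simp [Matrix.one_apply_eq]⟩

lemma Rcd_trans {i j l : Fin n} (h1 : Rcd M T i j) (h2 : Rcd M T j l) : Rcd M T i l := by
  obtain ⟨k1, h1⟩ := h1
  obtain ⟨k2, h2⟩ := h2
  exact ⟨k1 + k2, by rw [add_mul]; exact powAddPos hM h1 h2⟩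

lemma Ed_symm {i j : Fin n} (h : Ed M T i j) : Ed M T j i := by
  rcases h with rfl | ⟨h1, h2⟩
  · exact Or.inl rfl
  · exact Or.inr ⟨h2, h1⟩

lemma Ed_trans {i j l : Fin n} (h1 : Ed M T i j) (h2 : Ed M T j l) : Ed M T i l := by
  rcases h1 with rfl | ⟨ha, hb⟩
  · exact h2
  · rcases h2 with rfl | ⟨hc, hd⟩
    · exact Or.inr ⟨ha, hb⟩
    · exact Or.inr ⟨PRd_trans M T hM ha hc, PRd_trans M T hM hd hb⟩

lemma Cld_eq {i j : Fin n} (h : Ed M T i j) : Cld M T i = Cld M T j := by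
  classical
  ext x
  simp only [Cld, Finset.mem_filter, Finset.mem_univ, true_and]
  exact ⟨fun hx => Ed_trans M T hM (Ed_symm M T hM h) hx, fun hx => Ed_trans M T hM h hx⟩

lemma Ed_repd (i : Fin n) : Ed M T i (repd M T i) := by
  classical
  have h := (Cld M T i).min'_mem ⟨i, mem_Cld_self M T i⟩
  simp only [Cld, Finset.mem_filter, Finset.mem_univ, true_and] at h
  exact h

lemma repd_eq {i j : Fin n} (h : Ed M T i j) : repd M T i = repd M T j := by
  unfold repd
  congr 1
  exact Cld_eq M T hM h

lemma repd_to_Ed {i j : Fin n} (h : repd M T i = repd M T j) : Ed M T i j := by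
  refine Ed_trans M T hM (Ed_repd M T hM i) ?_
  rw [h]
  exact Ed_symm M T hM (Ed_repd M T hM j)

lemma RSd_mono {i j : Fin n} (h : Rcd M T i j) : RSd M T j ⊆ RSd M T i := by
  classical
  intro x hx
  simp only [RSd, Finset.mem_filter, Finset.mem_univ, true_and] at hx ⊢
  exact Rcd_trans M T hM h hx

lemma rkd_eq {i j : Fin n} (h : Ed M T i j) : rkd M T i = rkd M T j := by
  rcases h with rfl | ⟨h1, h2⟩
  · rfl
  · obtain ⟨k1, hk1, h1⟩ := h1
    obtain ⟨k2, hk2, h2⟩ := h2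
    exact le_antisymm (Finset.card_le_card (RSd_mono M T hM ⟨k2, h2⟩))
      (Finset.card_le_card (RSd_mono M T hM ⟨k1, h1⟩))

end lems

lemma rkd_le (i : Fin n) : rkd M T i ≤ n := by
  classical
  have h := Finset.card_filter_le (Finset.univ : Finset (Fin n)) (Rcd M T i)
  simpa [rkd, RSd] using h

end Main



/-- Every non-negative integer square matrix has a positive power which (up to
conjugation by a permutation, absorbed in the block-assignment function) is in
PB-Frobenius form. -/
theorem statement0 {n : ℕ} (M : Matrix (Fin n) (Fin n) ℝ)
    (hZ : ∀ i j, ∃ z : ℕ, M i j = (z : ℝ)) :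
    ∃ t : ℕ, 1 ≤ t ∧ IsPBFrobenius (M ^ t) := by
  classical
  have hM : ∀ i j, 0 ≤ M i j := by
    intro i j
    obtain ⟨z, hz⟩ := hZ i j
    rw [hz]
    exact Nat.cast_nonneg z
  obtain ⟨T, hTpos, hkey⟩ := PBF.keyT hM
  refine ⟨T, hTpos, ?_⟩
  -- the block assignment
  have hbnd : ∀ i : Fin n, n * rkd M T i + (repd M T i : ℕ) < n * n + n := by
    intro i
    have h1 : (repd M T i : ℕ) < n := (repd M T i).isLt
    have h2 : rkd M T i ≤ n := rkd_le M T i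
    have h3 : n * rkd M T i ≤ n * n := Nat.mul_le_mul_left n h2
    omega
  set bfun : Fin n → Fin (n * n + n) :=
    fun i => ⟨n * rkd M T i + (repd M T i : ℕ), hbnd i⟩ with hbfun
  have hbval : ∀ i : Fin n, (bfun i : ℕ) = n * rkd M T i + (repd M T i : ℕ) := fun i => rfl
  have hbE : ∀ {i j : Fin n}, Ed M T i j → bfun i = bfun j := by
    intro i j hij
    apply Fin.ext
    rw [hbval i, hbval j, rkd_eq M T hM hij, repd_eq M T hM hij]
  have hbrep : ∀ {i j : Fin n}, bfun i = bfun j → Ed M T i j := by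
    intro i j h
    apply repd_to_Ed M T hM
    have h' : n * rkd M T i + (repd M T i : ℕ) = n * rkd M T j + (repd M T j : ℕ) := by
      rw [← hbval i, ← hbval j, h]
    have hi : (repd M T i : ℕ) < n := (repd M T i).isLt
    have hj : (repd M T j : ℕ) < n := (repd M T j).isLt
    have hval : (repd M T i : ℕ) = (repd M T j : ℕ) := by
      have e1 : (n * rkd M T i + (repd M T i : ℕ)) % n = (repd M T i : ℕ) := by
        rw [Nat.mul_add_mod]; exact Nat.mod_eq_of_lt hi
      have e2 : (n * rkd M T j + (repd M T j : ℕ)) % n = (repd M T j : ℕ) := by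
        rw [Nat.mul_add_mod]; exact Nat.mod_eq_of_lt hj
      rw [← e1, ← e2, h']
    exact Fin.ext hval
  refine ⟨n * n + n, bfun, ?_, ?_⟩
  · -- lower triangular
    intro i j hb
    by_contra hne
    have hpos : 0 < (M ^ T) i j :=
      lt_of_le_of_ne (PBF.powEntryNonneg hM T i j) (Ne.symm hne)
    have hpos' : 0 < (M ^ (1 * T)) i j := by rwa [one_mul]
    have hRij : Rcd M T i j := ⟨1, hpos'⟩
    by_cases hji : Rcd M T j i
    · obtain ⟨k, hk⟩ := hji
      rcases Nat.eq_zero_or_pos k with rfl | hkp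
      · rw [zero_mul, pow_zero] at hk
        have hji2 : j = i := by
          by_contra hne2
          rw [Matrix.one_apply_ne hne2] at hk
          exact lt_irrefl 0 hk
        rw [hji2] at hb
        exact lt_irrefl _ hb
      · have hEij : Ed M T i j := Or.inr ⟨⟨1, one_pos, hpos'⟩, ⟨k, hkp, hk⟩⟩
        rw [hbE hEij] at hb
        exact lt_irrefl _ hb
    · have hiRS : i ∈ RSd M T i := by
        simp only [RSd, Finset.mem_filter, Finset.mem_univ, true_and]
        exact Rcd_refl M T hM i
      have hiRSj : i ∉ RSd M T j := by
        simp only [RSd, Finset.mem_filter, Finset.mem_univ, true_and]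
        exact hji
      have hss : RSd M T j ⊂ RSd M T i :=
        (Finset.ssubset_iff_of_subset (RSd_mono M T hM hRij)).mpr ⟨i, hiRS, hiRSj⟩
      have hrklt : rkd M T j < rkd M T i := Finset.card_lt_card hss
      have hblt : bfun j < bfun i := by
        rw [Fin.lt_def, hbval j, hbval i]
        have hrj : (repd M T j : ℕ) < n := (repd M T j).isLt
        have h4 : n * rkd M T j + n ≤ n * rkd M T i := by
          rw [← Nat.mul_succ]; exact Nat.mul_le_mul_left n hrklt
        omega
      exact absurd hb (asymm hblt)
  · -- blocks
    intro p
    by_cases hrec : ∃ v, bfun v = p ∧ PRd M T v v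
    · left
      obtain ⟨v, hvp, hvPR⟩ := hrec
      refine ⟨1, one_pos, ?_⟩
      rintro ⟨x, hx⟩ ⟨y, hy⟩
      rw [pow_one]
      show 0 < (M ^ T) x y
      have hEvx : Ed M T v x := hbrep (hvp.trans hx.symm)
      have hEvy : Ed M T v y := hbrep (hvp.trans hy.symm)
      have hExt : ∀ {w : Fin n}, Ed M T v w → PRd M T v w ∧ PRd M T w v := by
        rintro w (rfl | h)
        · exact ⟨hvPR, hvPR⟩
        · exact h
      have hPRxy : PRd M T x y :=
        PRd_trans M T hM (hExt hEvx).2 (hExt hEvy).1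
      have hPRyx : PRd M T y x :=
        PRd_trans M T hM (hExt hEvy).2 (hExt hEvx).1
      exact hkey x y hPRxy hPRyx
    · right
      push_neg at hrec
      have hzero : diagBlock (M ^ T) bfun p = 0 := by
        apply Matrix.ext
        rintro ⟨x, hx⟩ ⟨y, hy⟩
        have hExy : Ed M T x y := hbrep (hx.trans hy.symm)
        have hxy : x = y := by
          rcases hExy with rfl | ⟨h1, h2⟩
          · rfl
          · exact absurd (PRd_trans M T hM h1 h2) (fun ⟨k, hk, hk'⟩ => absurd hk' (not_lt.mpr (hrec x hx k hk)))
        subst hxy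
        show (M ^ T) x x = (0 : Matrix _ _ ℝ) _ _
        rw [Matrix.zero_apply]
        by_contra h
        have hp : 0 < (M ^ T) x x :=
          lt_of_le_of_ne (PBF.powEntryNonneg hM T x x) (Ne.symm h)
        exact absurd hp (not_lt.mpr (by simpa using hrec x hx 1 one_pos))
      refine ⟨0, ?_⟩
      intro t ht x y
      rw [hzero, zero_pow (by omega : t ≠ 0), Matrix.zero_apply]
end
end

section
/- A non-negative integer square matrix M is expanding (no coordinate vector is mapped by a positive power of M to itself or to the zero vector) if and only if for every non-negative column vector v ≠ 0 the norms ‖M^t v‖ tend to infinity as t → ∞. -/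
open Filter Matrix Finset

noncomputable section

lemma sum_eq_one_nat {n : ℕ} (f : Fin n → ℕ) (h : ∑ j, f j = 1) :
    ∃ j, ∀ i, f i = if i = j then 1 else 0 := by
  have h1 : ∃ j, f j ≠ 0 := by
    by_contra hc; push_neg at hc; simp [hc] at h
  obtain ⟨j, hj⟩ := h1
  refine ⟨j, fun i => ?_⟩
  by_cases hij : i = j
  · subst hij
    have hle : f i ≤ 1 := h ▸ Finset.single_le_sum (fun _ _ => Nat.zero_le _) (mem_univ i)
    rw [if_pos rfl]; omega
  · simp only [if_neg hij]
    have hpair : f i + f j ≤ ∑ k, f k := by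
      have hsub := Finset.sum_le_sum_of_subset (Finset.subset_univ ({i, j} : Finset (Fin n)))
        (f := f)
      rwa [Finset.sum_pair hij] at hsub
    have hle : f j ≤ 1 := h ▸ Finset.single_le_sum (fun _ _ => Nat.zero_le _) (mem_univ j)
    omega

lemma permLemma {n : ℕ} (A : Matrix (Fin n) (Fin n) ℕ) (w : Fin n → ℕ)
    (hw : A.mulVec w = w) (hw0 : w ≠ 0) :
    (∃ j, ∀ i, A i j = 0) ∨ ∃ j, ∃ k, 0 < k ∧ ∀ i, (A ^ k) i j = if i = j then 1 else 0 := by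
  classical
  by_cases hz : ∃ j, ∀ i, A i j = 0
  · exact Or.inl hz
  push_neg at hz
  right
  have hcol : ∀ m, 1 ≤ ∑ i, A i m := by
    intro m
    obtain ⟨i, hi⟩ := hz m
    calc 1 ≤ A i m := Nat.one_le_iff_ne_zero.2 hi
      _ ≤ ∑ i, A i m := Finset.single_le_sum (f := fun i' => A i' m) (fun _ _ => Nat.zero_le _) (mem_univ i)
  have hmv : ∀ j, ∑ m, A j m * w m = w j := by
    intro j
    have := congrFun hw j
    simpa [Matrix.mulVec, dotProduct] using this
  have hsum : ∑ m, (∑ i, A i m) * w m = ∑ m, w m := by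
    calc ∑ m, (∑ i, A i m) * w m = ∑ m, ∑ i, A i m * w m := by
          simp [Finset.sum_mul]
      _ = ∑ i, ∑ m, A i m * w m := Finset.sum_comm
      _ = ∑ i, w i := by simp [hmv]
  have heq : ∀ m, (∑ i, A i m) * w m = w m := by
    have hle : ∀ m ∈ univ, w m ≤ (∑ i, A i m) * w m := fun m _ =>
      Nat.le_mul_of_pos_left _ (hcol m)
    intro m
    exact ((Finset.sum_eq_sum_iff_of_le hle).1 hsum.symm m (mem_univ m)).symm
  have hcol1 : ∀ m, w m ≠ 0 → ∑ i, A i m = 1 := by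
    intro m hm
    have h1 : (∑ i, A i m) * w m = 1 * w m := by rw [one_mul]; exact heq m
    exact Nat.eq_of_mul_eq_mul_right (Nat.pos_of_ne_zero hm) h1
  have hsig : ∀ m, w m ≠ 0 → ∃ j, ∀ i, A i m = if i = j then 1 else 0 :=
    fun m hm => sum_eq_one_nat _ (hcol1 m hm)
  let σ : Fin n → Fin n := fun m => if h : w m ≠ 0 then (hsig m h).choose else m
  have hσ : ∀ m (hm : w m ≠ 0) (i : Fin n), A i m = if i = σ m then 1 else 0 := by
    intro m hm i
    simp only [σ, dif_pos hm]
    exact (hsig m hm).choose_spec i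
  have hstep : ∀ m, w m ≠ 0 → w (σ m) ≠ 0 := by
    intro m hm
    have h2 : A (σ m) m * w m ≤ ∑ l, A (σ m) l * w l :=
      Finset.single_le_sum (f := fun l => A (σ m) l * w l) (fun _ _ => Nat.zero_le _)
        (mem_univ m)
    rw [hσ m hm (σ m), if_pos rfl, one_mul, hmv (σ m)] at h2
    intro hc
    rw [hc] at h2
    exact hm (Nat.le_zero.1 h2)
  have hiter : ∀ (k : ℕ) (m : Fin n), w m ≠ 0 →
      ∀ i, (A ^ k) i m = if i = σ^[k] m then 1 else 0 := by
    intro k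
    induction k with
    | zero => intro m hm i; simp [Matrix.one_apply]; exact if_congr Iff.rfl rfl rfl
    | succ k ih =>
      intro m hm i
      have h1 : (A ^ (k + 1)) i m = ∑ l, (A ^ k) i l * A l m := by
        rw [pow_succ, Matrix.mul_apply]
      rw [h1]
      have h2 : ∀ l, (A ^ k) i l * A l m = if l = σ m then (A ^ k) i (σ m) else 0 := by
        intro l
        rw [hσ m hm l]
        by_cases h : l = σ m <;> simp [h]
      rw [Finset.sum_congr rfl (fun l _ => h2 l), Finset.sum_ite_eq' univ (σ m)]
      rw [if_pos (mem_univ _), ih (σ m) (hstep m hm) i, Function.iterate_succ_apply]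
  obtain ⟨m0, hm0⟩ := Function.ne_iff.1 hw0
  simp only [Pi.zero_apply] at hm0
  have hu : ∀ t, w (σ^[t] m0) ≠ 0 := by
    intro t
    induction t with
    | zero => exact hm0
    | succ t ih => rw [Function.iterate_succ_apply']; exact hstep _ ih
  have key : ∀ a b : ℕ, a < b → σ^[a] m0 = σ^[b] m0 →
      ∃ j, ∃ k, 0 < k ∧ ∀ i, (A ^ k) i j = if i = j then 1 else 0 := by
    intro a b hab he
    refine ⟨σ^[a] m0, b - a, by omega, fun i => ?_⟩
    have hx : σ^[b - a] (σ^[a] m0) = σ^[a] m0 := by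
      rw [← Function.iterate_add_apply]
      have : b - a + a = b := by omega
      rw [this, ← he]
    rw [hiter (b - a) (σ^[a] m0) (hu a) i, hx]
  obtain ⟨a, b, hab, he⟩ := Finite.exists_ne_map_eq_of_infinite (fun t : ℕ => σ^[t] m0)
  rcases Nat.lt_or_ge a b with h | h
  · exact key a b h he
  · exact key b a (by omega) he.symm

lemma natCoreAux {n : ℕ} (N : Matrix (Fin n) (Fin n) ℕ)
    (hfix : ∀ (i : Fin n) (k : ℕ), 0 < k → ¬ ∀ j, (N ^ k) j i = if j = i then 1 else 0)
    (hkill : ∀ (i : Fin n) (k : ℕ), 0 < k → ¬ ∀ j, (N ^ k) j i = 0)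
    (l : Fin n) (a b : ℕ) (hab : a < b)
    (hcols : ∀ j, (N ^ a) j l = (N ^ b) j l) : False := by
  set w : Fin n → ℕ := fun j => (N ^ a) j l with hwdef
  set A : Matrix (Fin n) (Fin n) ℕ := N ^ (b - a) with hAdef
  have hb : (N : Matrix (Fin n) (Fin n) ℕ) ^ b = A * N ^ a := by
    rw [hAdef, ← pow_add]
    congr 1
    omega
  have hA : A.mulVec w = w := by
    funext j
    have h1 : (N ^ b) j l = ∑ m, A j m * w m := by
      rw [hb, Matrix.mul_apply]
    simp only [Matrix.mulVec, dotProduct]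
    rw [← h1, hwdef, ← hcols j]
  by_cases hw0 : w = 0
  · have ha : 0 < a := by
      rcases Nat.eq_zero_or_pos a with h | h
      · exfalso
        have := congrFun hw0 l
        simp [hwdef, h, Matrix.one_apply] at this
      · exact h
    exact hkill l a ha (fun j => congrFun hw0 j)
  · rcases permLemma A w hA hw0 with ⟨j, hj⟩ | ⟨j, k, hk, hjk⟩
    · exact hkill j (b - a) (by omega) hj
    · have hAk : A ^ k = N ^ ((b - a) * k) := by rw [hAdef, ← pow_mul]
      exact hfix j ((b - a) * k) (Nat.mul_pos (by omega) hk) (hAk ▸ hjk)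

lemma natCore {n : ℕ} (N : Matrix (Fin n) (Fin n) ℕ)
    (hfix : ∀ (i : Fin n) (k : ℕ), 0 < k → ¬ ∀ j, (N ^ k) j i = if j = i then 1 else 0)
    (hkill : ∀ (i : Fin n) (k : ℕ), 0 < k → ¬ ∀ j, (N ^ k) j i = 0)
    (l : Fin n) : Tendsto (fun t => ∑ j, (N ^ t) j l) atTop atTop := by
  have hcolN : ∀ m, 1 ≤ ∑ i, N i m := by
    intro m
    by_contra hc
    push_neg at hc
    have h0 : ∀ i, N i m = 0 := by
      intro i
      have h1 : N i m ≤ ∑ i', N i' m := Finset.single_le_sum (f := fun i' => N i' m)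
        (fun _ _ => Nat.zero_le _) (mem_univ i)
      omega
    exact hkill m 1 one_pos (by simpa [pow_one] using h0)
  have hmono : Monotone (fun t => ∑ j, (N ^ t) j l) := by
    apply monotone_nat_of_le_succ
    intro t
    have hstep : ∀ j, (N ^ (t + 1)) j l = ∑ m, N j m * (N ^ t) m l := by
      intro j
      rw [pow_succ', Matrix.mul_apply]
    calc ∑ j, (N ^ t) j l ≤ ∑ m, (∑ j, N j m) * (N ^ t) m l := by
          apply Finset.sum_le_sum
          intro m _
          exact Nat.le_mul_of_pos_left _ (hcolN m)
      _ = ∑ m, ∑ j, N j m * (N ^ t) m l := by simp [Finset.sum_mul]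
      _ = ∑ j, ∑ m, N j m * (N ^ t) m l := Finset.sum_comm
      _ = ∑ j, (N ^ (t + 1)) j l := by simp [hstep]
  apply tendsto_atTop_atTop_of_monotone hmono
  by_contra hc
  push_neg at hc
  obtain ⟨B, hB⟩ := hc
  have hent : ∀ t j, (N ^ t) j l ≤ B := by
    intro t j
    have h1 : (N ^ t) j l ≤ ∑ j', (N ^ t) j' l := Finset.single_le_sum
      (f := fun j' => (N ^ t) j' l) (fun _ _ => Nat.zero_le _) (mem_univ j)
    have h2 := hB t
    omega
  obtain ⟨a, b, hab, he⟩ := Finite.exists_ne_map_eq_of_infinite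
    (fun t : ℕ => (fun j => (⟨(N ^ t) j l, Nat.lt_succ_of_le (hent t j)⟩ : Fin (B + 1))))
  have hcols : ∀ j, (N ^ a) j l = (N ^ b) j l := by
    intro j
    exact congrArg Fin.val (congrFun he j)
  rcases Nat.lt_or_ge a b with h | h
  · exact natCoreAux N hfix hkill l a b h hcols
  · exact natCoreAux N hfix hkill l b a (by omega) (fun j => (hcols j).symm)

lemma l1_single {n : ℕ} (i : Fin n) : l1 (Pi.single i (1 : ℝ)) = 1 := by
  simp [l1, Pi.single_apply, apply_ite abs, abs_one, abs_zero]

/-- A non-negative integer square matrix is expanding iff the ℓ¹-norms `‖M^t v‖`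
tend to infinity for every non-negative `v ≠ 0`. -/
theorem statement1 {n : ℕ} (M : Matrix (Fin n) (Fin n) ℝ)
    (hZ : ∀ i j, ∃ z : ℕ, M i j = (z : ℝ)) :
    MatExpanding M ↔
      ∀ v : Fin n → ℝ, (∀ i, 0 ≤ v i) → v ≠ 0 →
        Tendsto (fun t : ℕ => l1 ((M ^ t).mulVec v)) atTop atTop := by
  classical
  choose Nf hN using hZ
  set NM : Matrix (Fin n) (Fin n) ℕ := Matrix.of Nf with hNM
  have hM : M = (Nat.castRingHom ℝ).mapMatrix NM := by
    ext i j
    simp [RingHom.mapMatrix_apply, Matrix.map_apply, hNM, hN i j]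
  have hpow : ∀ (t : ℕ) (i j : Fin n), (M ^ t) i j = ((NM ^ t) i j : ℝ) := by
    intro t i j
    rw [hM, ← map_pow]
    simp [RingHom.mapMatrix_apply, Matrix.map_apply]
  have hmvs : ∀ (t : ℕ) (i j : Fin n),
      (M ^ t).mulVec (Pi.single i 1) j = (M ^ t) j i := by
    intro t i j
    simp [Matrix.mulVec, dotProduct, Pi.single_apply, mul_ite]
  constructor
  · -- expanding → tendsto
    intro hexp v hv hv0
    have hfix : ∀ (i : Fin n) (k : ℕ), 0 < k →
        ¬ ∀ j, (NM ^ k) j i = if j = i then 1 else 0 := by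
      intro i k hk h
      apply hexp
      refine ⟨i, k, hk, Or.inl ?_⟩
      funext j
      rw [hmvs k i j, hpow k j i, h j, Pi.single_apply]
      by_cases hij : j = i <;> simp [hij]
    have hkill : ∀ (i : Fin n) (k : ℕ), 0 < k → ¬ ∀ j, (NM ^ k) j i = 0 := by
      intro i k hk h
      apply hexp
      refine ⟨i, k, hk, Or.inr ?_⟩
      funext j
      rw [hmvs k i j, hpow k j i, h j]
      simp
    obtain ⟨l0, hl0'⟩ := Function.ne_iff.1 hv0
    simp only [Pi.zero_apply] at hl0'
    have hl0 : 0 < v l0 := lt_of_le_of_ne (hv l0) (Ne.symm hl0')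
    have hC := natCore NM hfix hkill l0
    have hCcast : Tendsto (fun t => ((∑ j, (NM ^ t) j l0 : ℕ) : ℝ)) atTop atTop :=
      tendsto_natCast_atTop_atTop.comp hC
    have hCm : Tendsto (fun t => v l0 * ((∑ j, (NM ^ t) j l0 : ℕ) : ℝ)) atTop atTop :=
      hCcast.const_mul_atTop hl0
    apply tendsto_atTop_mono _ hCm
    intro t
    have hnn : ∀ j, 0 ≤ (M ^ t).mulVec v j := by
      intro j
      simp only [Matrix.mulVec, dotProduct]
      apply Finset.sum_nonneg
      intro m _
      exact mul_nonneg (by rw [hpow t j m]; positivity) (hv m)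
    have h1 : l1 ((M ^ t).mulVec v) = ∑ m, (∑ j, (M ^ t) j m) * v m := by
      unfold l1
      calc ∑ j, |(M ^ t).mulVec v j| = ∑ j, (M ^ t).mulVec v j := by
            apply Finset.sum_congr rfl
            intro j _
            exact abs_of_nonneg (hnn j)
        _ = ∑ j, ∑ m, (M ^ t) j m * v m := rfl
        _ = ∑ m, ∑ j, (M ^ t) j m * v m := Finset.sum_comm
        _ = ∑ m, (∑ j, (M ^ t) j m) * v m := by simp [Finset.sum_mul]
    rw [h1]
    have h2 : v l0 * ((∑ j, (NM ^ t) j l0 : ℕ) : ℝ) = (∑ j, (M ^ t) j l0) * v l0 := by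
      rw [mul_comm]
      congr 1
      push_cast
      exact Finset.sum_congr rfl (fun j _ => (hpow t j l0).symm)
    rw [h2]
    apply Finset.single_le_sum (f := fun m => (∑ j, (M ^ t) j m) * v m) _ (mem_univ l0)
    intro m _
    apply mul_nonneg _ (hv m)
    apply Finset.sum_nonneg
    intro j _
    rw [hpow t j m]
    positivity
  · -- tendsto → expanding
    intro h
    rintro ⟨i, k, hk, hcase⟩
    have hsingle_nn : ∀ j, 0 ≤ (Pi.single i 1 : Fin n → ℝ) j := by
      intro j
      rw [Pi.single_apply]
      by_cases hij : j = i <;> simp [hij]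
    have hsingle_ne : (Pi.single i 1 : Fin n → ℝ) ≠ 0 := by
      intro hc
      have := congrFun hc i
      simp at this
    have htend := h (Pi.single i 1) hsingle_nn hsingle_ne
    rcases hcase with hfix | hkill
    · -- M^{k*s} e_i = e_i
      have hks : ∀ s : ℕ, (M ^ (k * s)).mulVec (Pi.single i 1) = Pi.single i 1 := by
        intro s
        induction s with
        | zero => rw [Nat.mul_zero, pow_zero, Matrix.one_mulVec]
        | succ s ih =>
          have : M ^ (k * (s + 1)) = M ^ (k * s) * M ^ k := by
            rw [Nat.mul_succ, pow_add]
          rw [this, ← Matrix.mulVec_mulVec, hfix, ih]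
      have hcomp : Tendsto (fun s : ℕ => l1 ((M ^ (k * s)).mulVec (Pi.single i 1)))
          atTop atTop := by
        apply htend.comp
        apply tendsto_atTop_atTop_of_monotone
        · intro a b hab
          exact Nat.mul_le_mul_left k hab
        · intro c
          exact ⟨c, Nat.le_mul_of_pos_left c hk⟩
      obtain ⟨s, hs⟩ := (hcomp.eventually_ge_atTop 2).exists
      rw [hks s, l1_single] at hs
      linarith
    · have hks : ∀ t : ℕ, (M ^ (t + k)).mulVec (Pi.single i 1) = 0 := by
        intro t
        rw [pow_add, ← Matrix.mulVec_mulVec, hkill, Matrix.mulVec_zero]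
      have hcomp : Tendsto (fun t : ℕ => l1 ((M ^ (t + k)).mulVec (Pi.single i 1)))
          atTop atTop := htend.comp (tendsto_add_atTop_nat k)
      obtain ⟨t, ht⟩ := (hcomp.eventually_ge_atTop 1).exists
      rw [hks t] at ht
      simp [l1] at ht
      linarith
end
end

section
/- Let M be a non-negative integer square matrix in primitive Frobenius form with no zero columns, B be a principal block with PF-eigenvalue λ, and C(B) its dependency block union. Then there exists an eigenvector v(B) of M with eigenvalue λ of the form v(B) = v^PF + w, where v^PF is the extended Perron-Frobenius eigenvector of the diagonal block of B and w lies in the cone of C(B); moreover any eigenvector of M in the cone of B ∪ C(B) is either contained in the cone of C(B) or is a positive scalar multiple of v(B). -/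
open Filter Matrix

noncomputable section

/-- The relation `B_p ≻ B_q` on the blocks of `M` (blocks given by `b`):
some positive power of `M` has a positive entry in block row `q`, block column `p`. -/
def Succ {n m : ℕ} (M : Matrix (Fin n) (Fin n) ℝ) (b : Fin n → Fin m) (p q : Fin m) : Prop :=
  p ≠ q ∧ ∃ t : ℕ, 1 ≤ t ∧ ∃ r c, b r = q ∧ b c = p ∧ 0 < (M ^ t) r c


section PrincipalHelpers

open Finset in
lemma matpow_nonneg {ι : Type*} [Fintype ι] [DecidableEq ι]
    (A : Matrix ι ι ℝ) (hA : ∀ i j, 0 ≤ A i j) (t : ℕ) :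
    ∀ i j, 0 ≤ (A ^ t) i j := by
  induction t with
  | zero => intro i j; by_cases h : i = j <;> simp [pow_zero, Matrix.one_apply, h]
  | succ t ih =>
    intro i j
    rw [pow_succ, Matrix.mul_apply]
    exact Finset.sum_nonneg fun k _ => mul_nonneg (ih i k) (hA k j)

lemma pow_mulVec_eig {ι : Type*} [Fintype ι] [DecidableEq ι]
    (A : Matrix ι ι ℝ) (x : ι → ℝ) (μ : ℝ) (h : A.mulVec x = μ • x) (t : ℕ) :
    (A ^ t).mulVec x = μ ^ t • x := by
  induction t with
  | zero => simp [Matrix.one_mulVec]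
  | succ t ih =>
    rw [pow_succ', ← Matrix.mulVec_mulVec, ih, Matrix.mulVec_smul, h, smul_smul, pow_succ',
      mul_comm]

lemma pf_exists {ι : Type*} [Fintype ι] [DecidableEq ι] [Nonempty ι]
    (A : Matrix ι ι ℝ) (hA : ∀ i j, 0 ≤ A i j)
    (k : ℕ) (hk : 0 < k) (hpos : ∀ i j, 0 < (A ^ k) i j) :
    ∃ (ρ : ℝ) (u : ι → ℝ), 0 ≤ ρ ∧ (∀ i, 0 < u i) ∧ A.mulVec u = ρ • u := by
  classical
  clear hk
  set B := A ^ k with hB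
  have hB0 : ∀ i j, 0 ≤ B i j := matpow_nonneg A hA k
  have hBA : ∀ x : ι → ℝ, A.mulVec (B.mulVec x) = B.mulVec (A.mulVec x) := by
    intro x
    rw [Matrix.mulVec_mulVec, Matrix.mulVec_mulVec, hB, ← pow_succ', ← pow_succ]
  have hmulVec_cont : Continuous (fun x : ι → ℝ => B.mulVec x) := by
    refine continuous_pi fun i => ?_
    simp only [Matrix.mulVec, dotProduct]
    exact continuous_finset_sum _ fun j _ => continuous_const.mul (continuous_apply j)
  set K := (fun x => B.mulVec x) '' stdSimplex ℝ ι with hK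
  have hcompact : IsCompact K := (isCompact_stdSimplex ℝ ι).image hmulVec_cont
  have hKne : K.Nonempty :=
    ⟨_, ⟨Pi.single (Classical.arbitrary ι) 1, single_mem_stdSimplex ℝ _, rfl⟩⟩
  have hmv_pos : ∀ x : ι → ℝ, (∀ i, 0 ≤ x i) → (∃ j, 0 < x j) → ∀ i, 0 < B.mulVec x i := by
    intro x hx0 ⟨j, hj⟩ i
    have h1 : B i j * x j ≤ B.mulVec x i :=
      Finset.single_le_sum (f := fun l => B i l * x l)
        (fun l _ => mul_nonneg (hB0 i l) (hx0 l)) (Finset.mem_univ j)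
    exact lt_of_lt_of_le (mul_pos (hpos i j) hj) h1
  have hKpos : ∀ y ∈ K, ∀ i, 0 < y i := by
    rintro y ⟨x, hx, rfl⟩ i
    obtain ⟨hx0, hx1⟩ := hx
    refine hmv_pos x hx0 ?_ i
    by_contra h
    push_neg at h
    have : ∀ j, x j = 0 := fun j => le_antisymm (h j) (hx0 j)
    simp [this] at hx1
  set g : (ι → ℝ) → ℝ := fun y => Finset.univ.inf' Finset.univ_nonempty
    (fun i => A.mulVec y i / y i) with hg
  have hgcont : ContinuousOn g K := by
    apply ContinuousOn.finset_inf'_apply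
    intro i _
    have h1 : ContinuousOn (fun y : ι → ℝ => A.mulVec y i) K := by
      apply Continuous.continuousOn
      simp only [Matrix.mulVec, dotProduct]
      exact continuous_finset_sum _ fun j _ => continuous_const.mul (continuous_apply j)
    exact h1.div (continuous_apply i).continuousOn (fun y hy => (hKpos y hy i).ne')
  obtain ⟨y, hyK, hymax⟩ := hcompact.exists_isMaxOn hKne hgcont
  have hypos : ∀ i, 0 < y i := hKpos y hyK
  refine ⟨g y, y, ?_, hypos, ?_⟩
  · refine Finset.le_inf' _ _ fun i _ => ?_
    exact div_nonneg (Finset.sum_nonneg fun j _ => mul_nonneg (hA i j) (hypos j).le) (hypos i).le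
  have hge : ∀ i, g y * y i ≤ A.mulVec y i := by
    intro i
    have h1 : g y ≤ A.mulVec y i / y i := Finset.inf'_le _ (Finset.mem_univ i)
    exact (le_div_iff₀ (hypos i)).mp h1
  by_contra hne
  set z : ι → ℝ := fun i => A.mulVec y i - g y * y i with hz
  have hz0 : ∀ i, 0 ≤ z i := fun i => sub_nonneg.mpr (hge i)
  have hzne : ∃ j, 0 < z j := by
    by_contra h
    push_neg at h
    apply hne
    funext i
    have : z i = 0 := le_antisymm (h i) (hz0 i)
    have := sub_eq_zero.mp this
    simpa [Pi.smul_apply, smul_eq_mul] using this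
  set l : ℝ := ∑ i, y i with hl
  have hlpos : 0 < l := Finset.sum_pos (fun i _ => hypos i) Finset.univ_nonempty
  have hmem : l⁻¹ • y ∈ stdSimplex ℝ ι := by
    constructor
    · intro i; exact mul_nonneg (inv_nonneg.mpr hlpos.le) (hypos i).le
    · simp only [Pi.smul_apply, smul_eq_mul, ← Finset.mul_sum]
      rw [← hl, inv_mul_cancel₀ hlpos.ne']
  set y' : ι → ℝ := B.mulVec (l⁻¹ • y) with hy'
  have hy'K : y' ∈ K := ⟨l⁻¹ • y, hmem, rfl⟩
  have hy'pos : ∀ i, 0 < y' i := hKpos y' hy'K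
  have hy'2 : y' = l⁻¹ • (B.mulVec y) := by rw [hy', Matrix.mulVec_smul]
  have hAyd : A.mulVec y = g y • y + z := by
    funext i; simp [hz, Pi.smul_apply, smul_eq_mul]
  have hAy' : A.mulVec y' = g y • y' + l⁻¹ • (B.mulVec z) := by
    rw [hy'2, Matrix.mulVec_smul, hBA, hAyd, Matrix.mulVec_add, Matrix.mulVec_smul, smul_add,
      smul_comm]
  have hBz : ∀ i, 0 < B.mulVec z i := hmv_pos z hz0 hzne
  have hlt : g y < g y' := by
    rw [hg]
    rw [Finset.lt_inf'_iff]
    intro i _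
    rw [lt_div_iff₀ (hy'pos i)]
    rw [hAy']
    have : 0 < l⁻¹ * B.mulVec z i := mul_pos (inv_pos.mpr hlpos) (hBz i)
    simp only [Pi.add_apply, Pi.smul_apply, smul_eq_mul]
    linarith
  exact absurd (hymax hy'K) (not_le.mpr hlt)

lemma prim_unique {ι : Type*} [Fintype ι] [DecidableEq ι] [Nonempty ι]
    (A : Matrix ι ι ℝ) (hA : ∀ i j, 0 ≤ A i j)
    (k : ℕ) (hk : 0 < k) (hpos : ∀ i j, 0 < (A ^ k) i j)
    (lam μ : ℝ) (y x : ι → ℝ)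
    (hy : ∀ i, 0 < y i) (hyeig : A.mulVec y = lam • y)
    (hx0 : ∀ i, 0 ≤ x i) (hxne : x ≠ 0) (hxeig : A.mulVec x = μ • x) :
    μ = lam ∧ ∃ c : ℝ, 0 < c ∧ x = c • y := by
  classical
  clear hk
  have hAk0 := matpow_nonneg A hA k
  obtain ⟨j1, hj1⟩ : ∃ j, 0 < x j := by
    by_contra h
    push_neg at h
    exact hxne (funext fun i => le_antisymm (h i) (hx0 i))
  have hAkx : ∀ i, 0 < (A ^ k).mulVec x i := by
    intro i
    have h1 : (A ^ k) i j1 * x j1 ≤ (A ^ k).mulVec x i :=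
      Finset.single_le_sum (f := fun l => (A ^ k) i l * x l)
        (fun l _ => mul_nonneg (hAk0 i l) (hx0 l)) (Finset.mem_univ j1)
    exact lt_of_lt_of_le (mul_pos (hpos i j1) hj1) h1
  have hkx := pow_mulVec_eig A x μ hxeig k
  have hxpos : ∀ i, 0 < x i := by
    intro i
    have h1 : 0 < μ ^ k * x i := by
      have := hAkx i; rwa [hkx] at this
    rcases (mul_pos_iff.mp h1) with ⟨_, h⟩ | ⟨_, h⟩
    · exact h
    · exact absurd h (not_lt.mpr (hx0 i))
  have hcomp : ∀ (a b : ι → ℝ) (α β : ℝ), (∀ i, 0 < a i) → (∀ i, 0 < b i) →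
      A.mulVec a = α • a → A.mulVec b = β • b → α ≤ β := by
    intro a b α β ha hb haeig hbeig
    obtain ⟨i0, _, hmax⟩ := Finset.exists_max_image Finset.univ (fun i => a i / b i)
      Finset.univ_nonempty
    set c := a i0 / b i0 with hc
    have hcb : c * b i0 = a i0 := div_mul_cancel₀ _ (hb i0).ne'
    have hle : ∀ j, a j ≤ c * b j := by
      intro j
      have h := hmax j (Finset.mem_univ j)
      calc a j = a j / b j * b j := (div_mul_cancel₀ _ (hb j).ne').symm
      _ ≤ c * b j := mul_le_mul_of_nonneg_right h (hb j).le
    have h1 : α * a i0 ≤ c * (β * b i0) := by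
      have h2 : A.mulVec a i0 ≤ c * A.mulVec b i0 := by
        simp only [Matrix.mulVec, dotProduct, Finset.mul_sum]
        refine Finset.sum_le_sum fun j _ => ?_
        calc A i0 j * a j ≤ A i0 j * (c * b j) :=
              mul_le_mul_of_nonneg_left (hle j) (hA i0 j)
        _ = c * (A i0 j * b j) := by ring
      have h3 : A.mulVec a i0 = α * a i0 := by rw [haeig]; simp [smul_eq_mul]
      have h4 : A.mulVec b i0 = β * b i0 := by rw [hbeig]; simp [smul_eq_mul]
      rw [h3, h4] at h2; exact h2
    rw [← hcb] at h1
    have hcpos : 0 < c := div_pos (ha i0) (hb i0)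
    rcases le_or_gt α β with h | h
    · exact h
    · nlinarith [mul_pos hcpos (hb i0)]
  have hmueq : μ = lam := le_antisymm (hcomp x y μ lam hxpos hy hxeig hyeig)
    (hcomp y x lam μ hy hxpos hyeig hxeig)
  obtain ⟨i0, _, hmax⟩ := Finset.exists_max_image Finset.univ (fun i => x i / y i)
    Finset.univ_nonempty
  set c := x i0 / y i0 with hc
  have hcpos : 0 < c := div_pos (hxpos i0) (hy i0)
  have hcb : c * y i0 = x i0 := div_mul_cancel₀ _ (hy i0).ne'
  have hle : ∀ j, x j ≤ c * y j := by
    intro j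
    have h := hmax j (Finset.mem_univ j)
    calc x j = x j / y j * y j := (div_mul_cancel₀ _ (hy j).ne').symm
    _ ≤ c * y j := mul_le_mul_of_nonneg_right h (hy j).le
  set z : ι → ℝ := fun i => c * y i - x i with hz
  have hz0 : ∀ i, 0 ≤ z i := fun i => sub_nonneg.mpr (hle i)
  have hzeig : A.mulVec z = lam • z := by
    have : z = c • y - x := by funext i; simp [hz, smul_eq_mul]
    rw [this, Matrix.mulVec_sub, Matrix.mulVec_smul, hyeig, hxeig, hmueq, smul_sub, smul_comm]
  have hzzero : ∀ i, z i = 0 := by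
    by_contra h
    push_neg at h
    obtain ⟨i, hi⟩ := h
    have hzi : 0 < z i := lt_of_le_of_ne (hz0 i) (Ne.symm hi)
    have hkz := pow_mulVec_eig A z lam hzeig k
    have h1 : 0 < (A ^ k).mulVec z i0 := by
      have h2 : (A ^ k) i0 i * z i ≤ (A ^ k).mulVec z i0 :=
        Finset.single_le_sum (f := fun l => (A ^ k) i0 l * z l)
          (fun l _ => mul_nonneg (hAk0 i0 l) (hz0 l)) (Finset.mem_univ i)
      exact lt_of_lt_of_le (mul_pos (hpos i0 i) hzi) h2
    rw [hkz] at h1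
    simp only [Pi.smul_apply, smul_eq_mul, hz] at h1
    rw [hcb] at h1
    simp at h1
  refine ⟨hmueq, c, hcpos, funext fun i => ?_⟩
  simp only [Pi.smul_apply, smul_eq_mul]
  linarith [show c * y i - x i = 0 from hzzero i]

section Str
variable {n m : ℕ} (M : Matrix (Fin n) (Fin n) ℝ) (b : Fin n → Fin m)

lemma pow_lowtri (hlow : ∀ i j, b i < b j → M i j = 0) (t : ℕ) :
    ∀ i j, b i < b j → (M ^ t) i j = 0 := by
  induction t with
  | zero =>
    intro i j hij
    have : i ≠ j := fun h => absurd (h ▸ hij) (lt_irrefl _)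
    simp [pow_zero, Matrix.one_apply_ne this]
  | succ t ih =>
    intro i j hij
    rw [pow_succ', Matrix.mul_apply]
    refine Finset.sum_eq_zero fun s _ => ?_
    by_cases h : b i < b s
    · rw [hlow i s h, zero_mul]
    · rw [ih s j (lt_of_le_of_lt (not_lt.mp h) hij), mul_zero]

lemma pow_entry_prod (hM0 : ∀ i j, 0 ≤ M i j) (s t : ℕ) (i l j : Fin n)
    (h1 : 0 < (M ^ s) i l) (h2 : 0 < (M ^ t) l j) : 0 < (M ^ (s + t)) i j := by
  rw [pow_add, Matrix.mul_apply]
  have hterm : 0 < (M ^ s) i l * (M ^ t) l j := mul_pos h1 h2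
  have : (M ^ s) i l * (M ^ t) l j ≤ ∑ r, (M ^ s) i r * (M ^ t) r j :=
    Finset.single_le_sum (f := fun r => (M ^ s) i r * (M ^ t) r j)
      (fun r _ => mul_nonneg (matpow_nonneg M hM0 s i r) (matpow_nonneg M hM0 t r j))
      (Finset.mem_univ l)
  exact lt_of_lt_of_le hterm this

lemma diag_pow_le (hM0 : ∀ i j, 0 ≤ M i j) (q : Fin m) (t : ℕ) :
    ∀ i j : {x // b x = q}, ((diagBlock M b q) ^ t) i j ≤ (M ^ t) i.1 j.1 := by
  induction t with
  | zero =>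
    intro i j
    by_cases h : i = j
    · subst h; simp [pow_zero, Matrix.one_apply]
    · have h2 : i.1 ≠ j.1 := fun hh => h (Subtype.ext hh)
      simp [pow_zero, Matrix.one_apply_ne h, Matrix.one_apply_ne h2]
  | succ t ih =>
    intro i j
    rw [pow_succ, Matrix.mul_apply, pow_succ, Matrix.mul_apply]
    have h1 : ∀ s : {x // b x = q},
        ((diagBlock M b q) ^ t) i s * (diagBlock M b q) s j ≤ (M ^ t) i.1 s.1 * M s.1 j.1 := by
      intro s
      have hd : (diagBlock M b q) s j = M s.1 j.1 := rfl
      rw [hd]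
      exact mul_le_mul_of_nonneg_right (ih i s) (hM0 s.1 j.1)
    calc ∑ s : {x // b x = q}, ((diagBlock M b q) ^ t) i s * (diagBlock M b q) s j
        ≤ ∑ s : {x // b x = q}, (M ^ t) i.1 s.1 * M s.1 j.1 := Finset.sum_le_sum fun s _ => h1 s
      _ = ∑ s ∈ Finset.univ.filter (fun x => b x = q), (M ^ t) i.1 s * M s j.1 :=
          (Finset.sum_subtype (p := fun x => b x = q) _ (fun x => by simp)
            (fun s => (M ^ t) i.1 s * M s j.1)).symm
      _ ≤ ∑ s, (M ^ t) i.1 s * M s j.1 := by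
          refine Finset.sum_le_sum_of_subset_of_nonneg (Finset.filter_subset _ _) fun s _ _ =>
            mul_nonneg (matpow_nonneg M hM0 t i.1 s) (hM0 s j.1)

lemma succ_lt (hlow : ∀ i j, b i < b j → M i j = 0) {p q : Fin m} (h : Succ M b p q) : p < q := by
  obtain ⟨hne, t, _, r, c, hr, hc, hpos⟩ := h
  rcases lt_or_ge (b c) (b r) with h1 | h1
  · rw [hr, hc] at h1; exact h1
  · rcases eq_or_lt_of_le h1 with h2 | h2
    · rw [hr, hc] at h2; exact absurd h2.symm hne
    · exact absurd (pow_lowtri M b hlow t r c h2) (ne_of_gt hpos)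

lemma succ_all (hM0 : ∀ i j, 0 ≤ M i j)
    (hdiag : ∀ p' : Fin m, _root_.IsPrimitive (diagBlock M b p') ∨
      (∀ i j, b i = p' → b j = p' → i = j ∧ M i j = 0))
    {p q : Fin m} (h : Succ M b p q) :
    ∀ j, b j = q → ∃ t : ℕ, 1 ≤ t ∧ ∃ c, b c = p ∧ 0 < (M ^ t) j c := by
  intro j hj
  obtain ⟨hne, t, ht, r, c, hr, hc, hpos⟩ := h
  rcases hdiag q with ⟨k, hk, hkpos⟩ | hzero
  · have h1 : 0 < (M ^ k) j r := by
      have := hkpos ⟨j, hj⟩ ⟨r, hr⟩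
      exact lt_of_lt_of_le this (diag_pow_le M b hM0 q k ⟨j, hj⟩ ⟨r, hr⟩)
    exact ⟨k + t, le_trans ht (Nat.le_add_left t k),
      c, hc, pow_entry_prod M hM0 k t j r c h1 hpos⟩
  · obtain ⟨hjr, -⟩ := hzero j r hj hr
    exact ⟨t, ht, c, hc, hjr ▸ hpos⟩

lemma succ_chain (hM0 : ∀ i j, 0 ≤ M i j) (hlow : ∀ i j, b i < b j → M i j = 0)
    (hdiag : ∀ p' : Fin m, _root_.IsPrimitive (diagBlock M b p') ∨
      (∀ i j, b i = p' → b j = p' → i = j ∧ M i j = 0))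
    {p : Fin m} (i j : Fin n) (hij : 0 < M i j)
    (hj : b j = p ∨ Succ M b p (b j)) : b i = p ∨ Succ M b p (b i) := by
  by_cases hip : b i = p
  · exact Or.inl hip
  rcases hj with hjp | hjs
  · refine Or.inr ⟨fun h => hip h.symm, 1, le_refl 1, i, j, rfl, hjp, ?_⟩
    rwa [pow_one]
  · obtain ⟨t, ht, c, hc, hpos⟩ := succ_all M b hM0 hdiag hjs j rfl
    refine Or.inr ⟨fun h => hip h.symm, 1 + t, le_add_right (le_refl 1), i, c, rfl, hc, ?_⟩
    refine pow_entry_prod M hM0 1 t i j c ?_ hpos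
    rwa [pow_one]

lemma zero_of_not_succ (hM0 : ∀ i j, 0 ≤ M i j) (hlow : ∀ i j, b i < b j → M i j = 0)
    (hdiag : ∀ p' : Fin m, _root_.IsPrimitive (diagBlock M b p') ∨
      (∀ i j, b i = p' → b j = p' → i = j ∧ M i j = 0))
    {p : Fin m} (i j : Fin n) (hi : ¬ Succ M b p (b i)) (hj : Succ M b p (b j)) :
    M i j = 0 := by
  by_contra h
  have hij : 0 < M i j := lt_of_le_of_ne (hM0 i j) (Ne.symm h)
  rcases succ_chain M b hM0 hlow hdiag i j hij (Or.inr hj) with hip | his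
  · have h1 : p < b j := succ_lt M b hlow hj
    have h2 : ¬ b i < b j := fun hh => h (hlow i j hh)
    rw [hip] at h2
    exact h2 h1
  · exact hi his

lemma blockdata (hM0 : ∀ i j, 0 ≤ M i j)
    (hdiag : ∀ p' : Fin m, _root_.IsPrimitive (diagBlock M b p') ∨
      (∀ i j, b i = p' → b j = p' → i = j ∧ M i j = 0))
    (q : Fin m) (j0 : Fin n) (hj0 : b j0 = q) :
    ∃ (ρ : ℝ) (u : Fin n → ℝ), 0 ≤ ρ ∧ (∀ i, b i = q → 0 < u i) ∧
      (∀ i, b i ≠ q → u i = 0) ∧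
      ∀ i, b i = q →
        ∑ j ∈ Finset.univ.filter (fun j => b j = q), M i j * u j = ρ * u i := by
  classical
  haveI : Nonempty {i // b i = q} := ⟨⟨j0, hj0⟩⟩
  rcases hdiag q with ⟨k, hk, hkpos⟩ | hzero
  · obtain ⟨ρ, u', hρ0, hu'pos, heig⟩ := pf_exists (diagBlock M b q)
      (fun i j => hM0 i.1 j.1) k hk hkpos
    refine ⟨ρ, fun i => if h : b i = q then u' ⟨i, h⟩ else 0, hρ0, ?_, ?_, ?_⟩
    · intro i hi; dsimp only; rw [dif_pos hi]; exact hu'pos _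
    · intro i hi; dsimp only; rw [dif_neg hi]
    · intro i hi
      have h1 : ∑ j ∈ Finset.univ.filter (fun j => b j = q),
          M i j * (if h : b j = q then u' ⟨j, h⟩ else 0)
          = ∑ j : {x // b x = q}, M i j.1 * u' j := by
        rw [Finset.sum_subtype (p := fun x => b x = q) _ (fun x => by simp)
          (fun j => M i j * (if h : b j = q then u' ⟨j, h⟩ else 0))]
        exact Finset.sum_congr rfl fun j _ => by rw [dif_pos j.2]
      rw [h1]; dsimp only; rw [dif_pos hi]
      have h2 : (diagBlock M b q).mulVec u' ⟨i, hi⟩ = (ρ • u') ⟨i, hi⟩ := by rw [heig]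
      simpa [Matrix.mulVec, dotProduct, diagBlock, smul_eq_mul] using h2
  · refine ⟨0, fun i => if b i = q then 1 else 0, le_refl 0, ?_, ?_, ?_⟩
    · intro i hi; dsimp only; rw [if_pos hi]; exact one_pos
    · intro i hi; dsimp only; rw [if_neg hi]
    · intro i hi
      rw [zero_mul]
      refine Finset.sum_eq_zero fun j hj => ?_
      rw [(hzero i j hi (Finset.mem_filter.mp hj).2).2, zero_mul]

end Str
end PrincipalHelpers

/-- Principal eigenvector lemma: a principal block `p` (primitive diagonal block with
extended PF-eigenvector `vPF` and PF-eigenvalue `lam` strictly exceeding the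
PF-eigenvalues of all blocks in its dependency block union) determines an eigenvector
`v = vPF + w` of `M` with eigenvalue `lam`, `w` supported on the dependency block
union; and every eigenvector of `M` in the cone of `B_p ∪ C(B_p)` is either supported
on `C(B_p)` or a positive multiple of `v`. -/
theorem statement10 {n m : ℕ} (M : Matrix (Fin n) (Fin n) ℝ)
    (hZ : ∀ i j, ∃ z : ℕ, M i j = (z : ℝ))
    (b : Fin n → Fin m)
    (hlow : ∀ i j, b i < b j → M i j = 0)
    (hdiag : ∀ p' : Fin m, _root_.IsPrimitive (diagBlock M b p') ∨
      (∀ i j, b i = p' → b j = p' → i = j ∧ M i j = 0))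
    (hcol : ∀ j, ∃ i, 0 < M i j)
    (p : Fin m) (hp : _root_.IsPrimitive (diagBlock M b p))
    (lam : ℝ) (vPF : Fin n → ℝ)
    (hsupp : ∀ i, vPF i ≠ 0 → b i = p)
    (hposPF : ∀ i, b i = p → 0 < vPF i)
    (hnorm : ∑ i, |vPF i| = 1)
    (heig : ∀ i, b i = p →
      (∑ j ∈ Finset.univ.filter (fun j => b j = p), M i j * vPF j) = lam * vPF i)
    (hprincipal : ∀ q, Succ M b p q → ∀ (μ : ℝ) (u : Fin n → ℝ), u ≠ 0 →
      (∀ i, 0 ≤ u i) → (∀ i, u i ≠ 0 → b i = q) →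
      (∀ i, b i = q → (∑ j ∈ Finset.univ.filter (fun j => b j = q), M i j * u j) = μ * u i) →
      μ < lam) :
    ∃ v : Fin n → ℝ, (∀ i, 0 ≤ v i) ∧ M.mulVec v = lam • v ∧
      (∃ w : Fin n → ℝ, (∀ i, 0 ≤ w i) ∧ (∀ i, w i ≠ 0 → Succ M b p (b i)) ∧ v = vPF + w) ∧
      ∀ (u : Fin n → ℝ) (μ : ℝ), u ≠ 0 → (∀ i, 0 ≤ u i) →
        (∀ i, u i ≠ 0 → b i = p ∨ Succ M b p (b i)) → M.mulVec u = μ • u →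
        (∀ i, u i ≠ 0 → Succ M b p (b i)) ∨ ∃ c : ℝ, 0 < c ∧ u = c • v := by
  classical
  have hM0 : ∀ i j, 0 ≤ M i j := by
    intro i j; obtain ⟨z, hz⟩ := hZ i j; rw [hz]; exact Nat.cast_nonneg z
  have hmv : ∀ (N : Matrix (Fin n) (Fin n) ℝ) (x : Fin n → ℝ) (i : Fin n),
      N.mulVec x i = ∑ j, N i j * x j := fun N x i => rfl
  -- block p is nonempty
  have hvne : vPF ≠ 0 := by
    intro h
    rw [h] at hnorm
    simp at hnorm
  obtain ⟨i0, hi0v⟩ := Function.ne_iff.mp hvne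
  have hi0 : b i0 = p := hsupp i0 hi0v
  haveI hσne : Nonempty {i // b i = p} := ⟨⟨i0, hi0⟩⟩
  obtain ⟨k, hk, hkpos⟩ := hp
  have hAp0 : ∀ i j : {i // b i = p}, 0 ≤ diagBlock M b p i j := fun i j => hM0 i.1 j.1
  have hvPF0 : ∀ i, 0 ≤ vPF i := by
    intro i
    rcases eq_or_ne (vPF i) 0 with h | h
    · rw [h]
    · exact (hposPF i (hsupp i h)).le
  set yp : {i // b i = p} → ℝ := fun s => vPF s.1 with hypdef
  have hyppos : ∀ s, 0 < yp s := fun s => hposPF s.1 s.2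
  have hypeig : (diagBlock M b p).mulVec yp = lam • yp := by
    funext s
    have h1 : (diagBlock M b p).mulVec yp s = ∑ j : {x // b x = p}, M s.1 j.1 * vPF j.1 := rfl
    have h2 : ∑ j : {x // b x = p}, M s.1 j.1 * vPF j.1
        = ∑ j ∈ Finset.univ.filter (fun j => b j = p), M s.1 j * vPF j :=
      (Finset.sum_subtype (p := fun x => b x = p) _ (fun x => by simp)
        (fun j => M s.1 j * vPF j)).symm
    rw [h1, h2, heig s.1 s.2]
    simp [hypdef, smul_eq_mul]
  have hlam : 0 < lam := by
    set s0 : {i // b i = p} := ⟨i0, hi0⟩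
    have h1 := pow_mulVec_eig (diagBlock M b p) yp lam hypeig k
    have h2 : 0 < ((diagBlock M b p) ^ k).mulVec yp s0 := by
      rw [show ((diagBlock M b p) ^ k).mulVec yp s0
          = ∑ j, ((diagBlock M b p) ^ k) s0 j * yp j from rfl]
      exact Finset.sum_pos (fun j _ => mul_pos (hkpos s0 j) (hyppos j)) Finset.univ_nonempty
    rw [h1] at h2
    simp only [Pi.smul_apply, smul_eq_mul] at h2
    have hlamk : 0 < lam ^ k := by
      rcases mul_pos_iff.mp h2 with ⟨h, _⟩ | ⟨_, h⟩
      · exact h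
      · exact absurd (hyppos s0) (not_lt.mpr h.le)
    have h3 : 0 ≤ (diagBlock M b p).mulVec yp s0 := by
      rw [show (diagBlock M b p).mulVec yp s0 = ∑ j, diagBlock M b p s0 j * yp j from rfl]
      exact Finset.sum_nonneg fun j _ => mul_nonneg (hAp0 s0 j) (hyppos j).le
    rw [hypeig] at h3
    simp only [Pi.smul_apply, smul_eq_mul] at h3
    have hlam0 : 0 ≤ lam := by nlinarith [hyppos s0]
    rcases hlam0.lt_or_eq with h | h
    · exact h
    · rw [← h] at hlamk; simp [zero_pow hk.ne'] at hlamk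
  -- the uniform geometric bound on entries of powers of M in dependency columns
  have hQ : ∃ C rr : ℝ, 0 ≤ C ∧ 0 ≤ rr ∧ rr < lam ∧
      ∀ (t : ℕ) (i j : Fin n), Succ M b p (b j) → (M ^ t) i j ≤ C * rr ^ t := by
    by_cases hD : ∃ j : Fin n, Succ M b p (b j)
    · set Dfin : Finset (Fin n) := Finset.univ.filter (fun i : Fin n => Succ M b p (b i))
        with hDfin
      have hDne : Dfin.Nonempty := by
        obtain ⟨j, hj⟩ := hD
        exact ⟨j, Finset.mem_filter.mpr ⟨Finset.mem_univ j, hj⟩⟩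
      have hmemD : ∀ i, i ∈ Dfin ↔ Succ M b p (b i) := by
        intro i; simp [hDfin]
      have hbd : ∀ q : Fin m, ∃ (ρ : ℝ) (u : Fin n → ℝ), Succ M b p q →
          (0 ≤ ρ ∧ ρ < lam ∧ (∀ i, b i = q → 0 < u i) ∧ (∀ i, b i ≠ q → u i = 0) ∧
           ∀ i, b i = q → ∑ j ∈ Finset.univ.filter (fun j => b j = q), M i j * u j = ρ * u i) := by
        intro q
        by_cases hq : Succ M b p q
        · obtain ⟨-, t, -, r, c, hr, -, -⟩ := hq
          obtain ⟨ρ, u, hρ0, hupos, huzero, hueig⟩ := blockdata M b hM0 hdiag q r hr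
          have hu0 : ∀ i, 0 ≤ u i := by
            intro i
            by_cases h : b i = q
            · exact (hupos i h).le
            · rw [huzero i h]
          refine ⟨ρ, u, fun hq' => ⟨hρ0, ?_, hupos, huzero, hueig⟩⟩
          refine hprincipal q hq' ρ u ?_ hu0 ?_ hueig
          · intro h
            have := hupos r hr
            rw [h] at this
            exact lt_irrefl 0 this
          · intro i hi
            by_contra h
            exact hi (huzero i h)
        · exact ⟨0, 0, fun h => absurd h hq⟩
      choose ρf uf hf using hbd
      have hSi : ∀ i ∈ Dfin, Succ M b p (b i) := fun i hi => (hmemD i).mp hi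
      set ρmax : ℝ := Dfin.sup' hDne (fun i => ρf (b i)) with hρmax
      have hρmaxlt : ρmax < lam := by
        rw [hρmax, Finset.sup'_lt_iff]
        exact fun i hi => (hf (b i) (hSi i hi)).2.1
      obtain ⟨jD, hjD⟩ := id hDne
      have hρmax0 : 0 ≤ ρmax := by
        rw [hρmax]
        exact le_trans (hf (b jD) (hSi jD hjD)).1 (Finset.le_sup' (fun i => ρf (b i)) hjD)
      set rr : ℝ := (ρmax + lam) / 2 with hrr
      have hrr0 : 0 ≤ rr := by rw [hrr]; linarith
      have hrrlt : rr < lam := by rw [hrr]; linarith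
      set δ : ℝ := (lam - ρmax) / 2 with hδ
      have hδ0 : 0 < δ := by rw [hδ]; linarith
      have hufpos : ∀ i ∈ Dfin, 0 < uf (b i) i :=
        fun i hi => (hf (b i) (hSi i hi)).2.2.1 i rfl
      set umin : ℝ := Dfin.inf' hDne (fun i => uf (b i) i) with humin
      have humin0 : 0 < umin := by
        rw [humin, Finset.lt_inf'_iff]
        exact hufpos
      set umax : ℝ := Dfin.sup' hDne (fun i => uf (b i) i) with humax
      have humaxle : ∀ i ∈ Dfin, uf (b i) i ≤ umax := fun i hi => by
        rw [humax]; exact Finset.le_sup' (fun i => uf (b i) i) hi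
      have humax0 : 0 < umax := lt_of_lt_of_le (hufpos jD hjD) (humaxle jD hjD)
      set B0 : ℝ := ∑ i, ∑ j, M i j with hB0
      have hrow : ∀ i, ∑ j, M i j ≤ B0 := by
        intro i
        rw [hB0]
        exact Finset.single_le_sum
          (f := fun i => ∑ j, M i j)
          (fun l _ => Finset.sum_nonneg fun j _ => hM0 l j) (Finset.mem_univ i)
      set E : ℝ := max 1 ((B0 * umax + 1) / (δ * umin)) with hE
      have hE1 : 1 ≤ E := le_max_left _ _
      have hE0 : 0 < E := lt_of_lt_of_le one_pos hE1
      have hEkey : B0 * umax ≤ δ * umin * E := by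
        have h1 : (B0 * umax + 1) / (δ * umin) ≤ E := le_max_right _ _
        have h2 : 0 < δ * umin := mul_pos hδ0 humin0
        rw [div_le_iff₀ h2] at h1
        nlinarith
      set X : Fin n → ℝ := fun i =>
        if Succ M b p (b i) then E ^ (b i : ℕ) * uf (b i) i else 0 with hX
      have hX0 : ∀ i, 0 ≤ X i := by
        intro i
        rw [hX]
        dsimp only
        by_cases h : Succ M b p (b i)
        · rw [if_pos h]
          exact mul_nonneg (pow_nonneg hE0.le _) ((hf (b i) h).2.2.1 i rfl).le
        · rw [if_neg h]
      have hXposD : ∀ i, Succ M b p (b i) → 0 < X i := by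
        intro i h
        rw [hX]; dsimp only; rw [if_pos h]
        exact mul_pos (pow_pos hE0 _) ((hf (b i) h).2.2.1 i rfl)
      have hXeq : ∀ i, Succ M b p (b i) → X i = E ^ (b i : ℕ) * uf (b i) i := by
        intro i h; rw [hX]; dsimp only; rw [if_pos h]
      have hXzero : ∀ i, ¬ Succ M b p (b i) → X i = 0 := by
        intro i h; rw [hX]; dsimp only; rw [if_neg h]
      -- the key one-step inequality
      have hMX : ∀ i, M.mulVec X i ≤ rr * X i := by
        intro i
        by_cases hi : Succ M b p (b i)
        · -- split the sum over the block of i and the rest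
          rw [hmv]
          rw [← Finset.sum_filter_add_sum_filter_not Finset.univ (fun j => b j = b i)
            (fun j => M i j * X j)]
          have hq1 : (1:ℕ) ≤ (b i : ℕ) := by
            have h1 : p < b i := succ_lt M b hlow hi
            have h2 : (p : ℕ) < (b i : ℕ) := h1
            omega
          have hfirst : ∑ j ∈ Finset.univ.filter (fun j => b j = b i), M i j * X j
              = ρf (b i) * X i := by
            have h1 : ∀ j ∈ Finset.univ.filter (fun j => b j = b i),
                M i j * X j = E ^ (b i : ℕ) * (M i j * uf (b i) j) := by
              intro j hj
              have hbj : b j = b i := (Finset.mem_filter.mp hj).2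
              have hSj : Succ M b p (b j) := by rw [hbj]; exact hi
              rw [hXeq j hSj, hbj]
              ring
            rw [Finset.sum_congr rfl h1, ← Finset.mul_sum,
              (hf (b i) hi).2.2.2.2 i rfl, hXeq i hi]
            ring
          have hsecond : ∑ j ∈ Finset.univ.filter (fun j => ¬ b j = b i), M i j * X j
              ≤ δ * X i := by
            have hterm : ∀ j ∈ Finset.univ.filter (fun j => ¬ b j = b i),
                M i j * X j ≤ M i j * (E ^ ((b i : ℕ) - 1) * umax) := by
              intro j hj
              have hbj : ¬ b j = b i := (Finset.mem_filter.mp hj).2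
              by_cases hlt : b i < b j
              · simp [hlow i j hlt]
              · by_cases hSj : Succ M b p (b j)
                · have hjlt : b j < b i := lt_of_le_of_ne (not_lt.mp hlt) hbj
                  have hjlt' : (b j : ℕ) < (b i : ℕ) := hjlt
                  have hXj : X j ≤ E ^ ((b i : ℕ) - 1) * umax := by
                    rw [hXeq j hSj]
                    refine mul_le_mul ?_ ?_ ((hf (b j) hSj).2.2.1 j rfl).le
                      (pow_nonneg hE0.le _)
                    · exact pow_le_pow_right₀ hE1 (by omega)
                    · exact humaxle j ((hmemD j).mpr hSj)
                  exact mul_le_mul_of_nonneg_left hXj (hM0 i j)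
                · rw [hXzero j hSj, mul_zero]
                  exact mul_nonneg (hM0 i j) (mul_nonneg (pow_nonneg hE0.le _) humax0.le)
            calc ∑ j ∈ Finset.univ.filter (fun j => ¬ b j = b i), M i j * X j
                ≤ ∑ j ∈ Finset.univ.filter (fun j => ¬ b j = b i),
                    M i j * (E ^ ((b i : ℕ) - 1) * umax) := Finset.sum_le_sum hterm
              _ ≤ ∑ j, M i j * (E ^ ((b i : ℕ) - 1) * umax) := by
                  refine Finset.sum_le_sum_of_subset_of_nonneg (Finset.filter_subset _ _)
                    fun j _ _ => mul_nonneg (hM0 i j)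
                      (mul_nonneg (pow_nonneg hE0.le _) humax0.le)
              _ = (∑ j, M i j) * (E ^ ((b i : ℕ) - 1) * umax) := by
                  rw [Finset.sum_mul]
              _ ≤ B0 * (E ^ ((b i : ℕ) - 1) * umax) := by
                  refine mul_le_mul_of_nonneg_right (hrow i)
                    (mul_nonneg (pow_nonneg hE0.le _) humax0.le)
              _ = (B0 * umax) * E ^ ((b i : ℕ) - 1) := by ring
              _ ≤ (δ * umin * E) * E ^ ((b i : ℕ) - 1) := by
                  refine mul_le_mul_of_nonneg_right hEkey (pow_nonneg hE0.le _)
              _ = δ * (umin * E ^ (b i : ℕ)) := by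
                  have : E * E ^ ((b i : ℕ) - 1) = E ^ (b i : ℕ) := by
                    rw [← pow_succ']
                    congr 1
                    omega
                  rw [← this]
                  ring
              _ ≤ δ * X i := by
                  rw [hXeq i hi]
                  refine mul_le_mul_of_nonneg_left ?_ hδ0.le
                  rw [mul_comm (E ^ (b i : ℕ))]
                  refine mul_le_mul_of_nonneg_right ?_ (pow_nonneg hE0.le _)
                  rw [humin]
                  exact Finset.inf'_le (fun i => uf (b i) i) ((hmemD i).mpr hi)
          have hfin : ρf (b i) + δ ≤ rr := by
            have h5 : ρf (b i) ≤ ρmax := by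
              rw [hρmax]; exact Finset.le_sup' (fun i => ρf (b i)) ((hmemD i).mpr hi)
            rw [hrr, hδ]
            linarith
          have hXi0 : 0 ≤ X i := hX0 i
          calc (∑ j ∈ Finset.univ.filter (fun j => b j = b i), M i j * X j) +
                ∑ j ∈ Finset.univ.filter (fun j => ¬ b j = b i), M i j * X j
              ≤ ρf (b i) * X i + δ * X i := by
                rw [hfirst]
                exact add_le_add le_rfl hsecond
            _ = (ρf (b i) + δ) * X i := by ring
            _ ≤ rr * X i := mul_le_mul_of_nonneg_right hfin hXi0
        · rw [hXzero i hi, mul_zero, hmv]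
          refine le_of_eq (Finset.sum_eq_zero fun j _ => ?_)
          by_cases hSj : Succ M b p (b j)
          · rw [zero_of_not_succ M b hM0 hlow hdiag i j hi hSj, zero_mul]
          · rw [hXzero j hSj, mul_zero]
      -- iterate
      have hMXt : ∀ t : ℕ, ∀ i, (M ^ t).mulVec X i ≤ rr ^ t * X i := by
        intro t
        induction t with
        | zero => intro i; rw [pow_zero, Matrix.one_mulVec, pow_zero, one_mul]
        | succ t ih =>
          intro i
          rw [pow_succ', ← Matrix.mulVec_mulVec, hmv]
          calc ∑ j, M i j * (M ^ t).mulVec X j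
              ≤ ∑ j, M i j * (rr ^ t * X j) := by
                refine Finset.sum_le_sum fun j _ =>
                  mul_le_mul_of_nonneg_left (ih j) (hM0 i j)
            _ = rr ^ t * ∑ j, M i j * X j := by
                rw [Finset.mul_sum]
                exact Finset.sum_congr rfl fun j _ => by ring
            _ ≤ rr ^ t * (rr * X i) := by
                refine mul_le_mul_of_nonneg_left ?_ (pow_nonneg hrr0 t)
                rw [← hmv]
                exact hMX i
            _ = rr ^ (t + 1) * X i := by ring
      -- extract the entrywise bound
      set Xmax : ℝ := Dfin.sup' hDne X with hXmax
      set Xmin : ℝ := Dfin.inf' hDne X with hXmin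
      have hXmin0 : 0 < Xmin := by
        rw [hXmin, Finset.lt_inf'_iff]
        exact fun i hi => hXposD i (hSi i hi)
      have hXlemax : ∀ i, X i ≤ Xmax := by
        intro i
        by_cases h : Succ M b p (b i)
        · rw [hXmax]; exact Finset.le_sup' X ((hmemD i).mpr h)
        · rw [hXzero i h, hXmax]
          exact le_trans (hXposD jD (hSi jD hjD)).le (Finset.le_sup' X hjD)
      have hXmax0 : 0 ≤ Xmax := le_trans (hX0 jD) (hXlemax jD)
      refine ⟨Xmax / Xmin, rr, ?_, hrr0, hrrlt, ?_⟩
      · exact div_nonneg hXmax0 hXmin0.le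
      · intro t i j hj
        have h1 : (M ^ t) i j * X j ≤ rr ^ t * Xmax := by
          calc (M ^ t) i j * X j ≤ (M ^ t).mulVec X i := by
                rw [hmv]
                exact Finset.single_le_sum (f := fun l => (M ^ t) i l * X l)
                  (fun l _ => mul_nonneg (matpow_nonneg M hM0 t i l) (hX0 l))
                  (Finset.mem_univ j)
            _ ≤ rr ^ t * X i := hMXt t i
            _ ≤ rr ^ t * Xmax := mul_le_mul_of_nonneg_left (hXlemax i)
                (pow_nonneg hrr0 t)
        have hXj : Xmin ≤ X j := by
          rw [hXmin]; exact Finset.inf'_le X ((hmemD j).mpr hj)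
        have h2 : (M ^ t) i j * Xmin ≤ rr ^ t * Xmax := by
          refine le_trans ?_ h1
          exact mul_le_mul_of_nonneg_left hXj (matpow_nonneg M hM0 t i j)
        rw [div_mul_eq_mul_div, le_div_iff₀ hXmin0]
        calc (M ^ t) i j * Xmin ≤ rr ^ t * Xmax := h2
          _ = Xmax * rr ^ t := by ring
    · refine ⟨0, lam / 2, le_refl 0, by linarith, by linarith, ?_⟩
      intro t i j hj
      exact absurd ⟨j, hj⟩ hD
  obtain ⟨C, rr, hC0, hrr0, hrrlt, hQb⟩ := hQ
  -- the defect vector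
  set rv : Fin n → ℝ := fun i => M.mulVec vPF i - lam * vPF i with hrv
  have hrv_blockp : ∀ i, b i = p → rv i = 0 := by
    intro i hi
    have h1 : ∑ j ∈ Finset.univ.filter (fun j => b j = p), M i j * vPF j
        = ∑ j, M i j * vPF j := by
      refine Finset.sum_filter_of_ne fun j _ hj => ?_
      refine hsupp j fun h => hj ?_
      rw [h, mul_zero]
    rw [hrv]
    dsimp only
    rw [hmv, ← h1, heig i hi]
    ring
  have hvPFz : ∀ i, b i ≠ p → vPF i = 0 := by
    intro i hi
    by_contra h
    exact hi (hsupp i h)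
  have hrv0 : ∀ i, 0 ≤ rv i := by
    intro i
    by_cases hi : b i = p
    · rw [hrv_blockp i hi]
    · rw [hrv]
      dsimp only
      rw [hvPFz i hi, mul_zero, sub_zero, hmv]
      exact Finset.sum_nonneg fun j _ => mul_nonneg (hM0 i j) (hvPF0 j)
  have hrvsupp : ∀ i, rv i ≠ 0 → Succ M b p (b i) := by
    intro i hi
    have hbip : b i ≠ p := fun h => hi (hrv_blockp i h)
    have h1 : M.mulVec vPF i ≠ 0 := by
      intro h
      apply hi
      rw [hrv]
      dsimp only
      rw [h, hvPFz i hbip, mul_zero, sub_zero]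
    rw [hmv] at h1
    obtain ⟨j, -, hj⟩ := Finset.exists_ne_zero_of_sum_ne_zero h1
    have hMij : 0 < M i j := lt_of_le_of_ne (hM0 i j) (Ne.symm (left_ne_zero_of_mul hj))
    have hvj : b j = p := hsupp j (right_ne_zero_of_mul hj)
    rcases succ_chain M b hM0 hlow hdiag i j hMij (Or.inl hvj) with h | h
    · exact absurd h hbip
    · exact h
  have hsuppMt : ∀ t i, ((M ^ t).mulVec rv) i ≠ 0 → Succ M b p (b i) := by
    intro t
    induction t with
    | zero =>
      intro i hi
      rw [pow_zero, Matrix.one_mulVec] at hi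
      exact hrvsupp i hi
    | succ t ih =>
      intro i hi
      rw [pow_succ', ← Matrix.mulVec_mulVec, hmv] at hi
      obtain ⟨j, -, hj⟩ := Finset.exists_ne_zero_of_sum_ne_zero hi
      have hMij : 0 < M i j := lt_of_le_of_ne (hM0 i j) (Ne.symm (left_ne_zero_of_mul hj))
      have hSj : Succ M b p (b j) := ih j (right_ne_zero_of_mul hj)
      rcases succ_chain M b hM0 hlow hdiag i j hMij (Or.inr hSj) with h | h
      · exfalso
        have h1 : p < b j := succ_lt M b hlow hSj
        have h2 : ¬ b i < b j := fun hh => (ne_of_gt hMij) (hlow i j hh)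
        rw [h] at h2
        exact h2 h1
      · exact h
  have hMt_rv0 : ∀ t i, 0 ≤ (M ^ t).mulVec rv i := by
    intro t i
    rw [hmv]
    exact Finset.sum_nonneg fun j _ => mul_nonneg (matpow_nonneg M hM0 t i j) (hrv0 j)
  set R : ℝ := ∑ j, rv j with hR
  have hR0 : 0 ≤ R := Finset.sum_nonneg fun j _ => hrv0 j
  have hbound : ∀ t i, (M ^ t).mulVec rv i ≤ C * rr ^ t * R := by
    intro t i
    rw [hmv]
    calc ∑ j, (M ^ t) i j * rv j ≤ ∑ j, C * rr ^ t * rv j := by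
          refine Finset.sum_le_sum fun j _ => ?_
          rcases eq_or_ne (rv j) 0 with h | h
          · rw [h, mul_zero, mul_zero]
          · exact mul_le_mul_of_nonneg_right (hQb t i j (hrvsupp j h)) (hrv0 j)
      _ = C * rr ^ t * R := by rw [← Finset.mul_sum, hR]
  -- summability
  set s0 : ℝ := rr * lam⁻¹ with hs0
  have hs00 : 0 ≤ s0 := mul_nonneg hrr0 (inv_nonneg.mpr hlam.le)
  have hs01 : s0 < 1 := by
    rw [hs0, ← div_eq_mul_inv, div_lt_one hlam]
    exact hrrlt
  have htb : ∀ t i, lam⁻¹ ^ (t + 1) * ((M ^ t).mulVec rv i)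
      ≤ (lam⁻¹ * (C * R)) * s0 ^ t := by
    intro t i
    have h1 : lam⁻¹ ^ (t + 1) * ((M ^ t).mulVec rv i)
        ≤ lam⁻¹ ^ (t + 1) * (C * rr ^ t * R) :=
      mul_le_mul_of_nonneg_left (hbound t i) (pow_nonneg (inv_nonneg.mpr hlam.le) _)
    refine le_trans h1 (le_of_eq ?_)
    rw [hs0, mul_pow, pow_succ']
    ring
  have htnn : ∀ t i, 0 ≤ lam⁻¹ ^ (t + 1) * ((M ^ t).mulVec rv i) := fun t i =>
    mul_nonneg (pow_nonneg (inv_nonneg.mpr hlam.le) _) (hMt_rv0 t i)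
  have hsum : ∀ i, Summable (fun t : ℕ => lam⁻¹ ^ (t + 1) * ((M ^ t).mulVec rv i)) := by
    intro i
    refine Summable.of_nonneg_of_le (fun t => htnn t i) (fun t => htb t i) ?_
    exact (summable_geometric_of_lt_one hs00 hs01).mul_left _
  set w : Fin n → ℝ := fun i => ∑' t : ℕ, lam⁻¹ ^ (t + 1) * ((M ^ t).mulVec rv i) with hw
  have hw0 : ∀ i, 0 ≤ w i := fun i => tsum_nonneg (fun t => htnn t i)
  have hwsupp : ∀ i, w i ≠ 0 → Succ M b p (b i) := by
    intro i hi
    by_contra h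
    apply hi
    rw [hw]
    dsimp only
    have : ∀ t : ℕ, lam⁻¹ ^ (t + 1) * ((M ^ t).mulVec rv i) = 0 := by
      intro t
      have h2 : (M ^ t).mulVec rv i = 0 := by
        by_contra h3
        exact h (hsuppMt t i h3)
      rw [h2, mul_zero]
    rw [tsum_congr this, tsum_zero]
  have hMw : ∀ i, M.mulVec w i = lam * w i - rv i := by
    intro i
    have hstep : M.mulVec w i = ∑' t : ℕ, lam⁻¹ ^ (t + 1) * ((M ^ (t + 1)).mulVec rv i) := by
      rw [hmv]
      have h1 : ∀ j, M i j * w j = ∑' t : ℕ, M i j * (lam⁻¹ ^ (t + 1) * ((M ^ t).mulVec rv j)) :=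
        fun j => (tsum_mul_left).symm
      calc ∑ j, M i j * w j
          = ∑ j, ∑' t : ℕ, M i j * (lam⁻¹ ^ (t + 1) * ((M ^ t).mulVec rv j)) :=
            Finset.sum_congr rfl fun j _ => h1 j
        _ = ∑' t : ℕ, ∑ j, M i j * (lam⁻¹ ^ (t + 1) * ((M ^ t).mulVec rv j)) :=
            (Summable.tsum_finsetSum (fun j _ => (hsum j).mul_left (M i j))).symm
        _ = ∑' t : ℕ, lam⁻¹ ^ (t + 1) * ((M ^ (t + 1)).mulVec rv i) := by
            refine tsum_congr fun t => ?_
            rw [show M ^ (t + 1) = M * M ^ t from pow_succ' M t, ← Matrix.mulVec_mulVec,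
              hmv M ((M ^ t).mulVec rv) i, Finset.mul_sum]
            exact Finset.sum_congr rfl fun j _ => by ring
    have hzerot : w i = lam⁻¹ * rv i + ∑' t : ℕ, lam⁻¹ ^ (t + 1 + 1) * ((M ^ (t + 1)).mulVec rv i) := by
      rw [hw]
      dsimp only
      rw [Summable.tsum_eq_zero_add (hsum i)]
      congr 1
      rw [pow_one, pow_zero, Matrix.one_mulVec]
    have hshift : ∑' t : ℕ, lam⁻¹ ^ (t + 1 + 1) * ((M ^ (t + 1)).mulVec rv i)
        = lam⁻¹ * ∑' t : ℕ, lam⁻¹ ^ (t + 1) * ((M ^ (t + 1)).mulVec rv i) := by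
      rw [← tsum_mul_left]
      refine tsum_congr fun t => ?_
      rw [pow_succ']
      ring
    rw [hstep]
    rw [hzerot, hshift]
    have hli : lam * lam⁻¹ = 1 := mul_inv_cancel₀ hlam.ne'
    field_simp
    ring
  have hMv : M.mulVec (vPF + w) = lam • (vPF + w) := by
    funext i
    rw [Matrix.mulVec_add]
    simp only [Pi.add_apply, Pi.smul_apply, smul_eq_mul]
    rw [hMw i]
    have : M.mulVec vPF i = lam * vPF i + rv i := by rw [hrv]; ring
    rw [this]
    ring
  refine ⟨vPF + w, ?_, hMv, ⟨w, hw0, hwsupp, rfl⟩, ?_⟩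
  · intro i
    exact add_nonneg (hvPF0 i) (hw0 i)
  -- uniqueness
  intro u μ hune hu0 husupp hueig
  by_cases hup : ∀ i, b i = p → u i = 0
  · left
    intro i hui
    rcases husupp i hui with h | h
    · exact absurd (hup i h) hui
    · exact h
  · right
    push_neg at hup
    obtain ⟨i1, hi1, hui1⟩ := hup
    have hublock : ∀ i, b i = p →
        ∑ j ∈ Finset.univ.filter (fun j => b j = p), M i j * u j = μ * u i := by
      intro i hi
      have h1 : ∑ j ∈ Finset.univ.filter (fun j => b j = p), M i j * u j
          = ∑ j, M i j * u j := by
        refine Finset.sum_filter_of_ne fun j _ hj => ?_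
        have hMij : M i j ≠ 0 := left_ne_zero_of_mul hj
        have huj : u j ≠ 0 := right_ne_zero_of_mul hj
        rcases husupp j huj with h | h
        · exact h
        · exfalso
          have h2 : p < b j := succ_lt M b hlow h
          have h3 : ¬ b i < b j := fun hh => hMij (hlow i j hh)
          rw [hi] at h3
          exact h3 h2
      rw [h1, ← hmv, hueig]
      simp [smul_eq_mul]
    set xp : {i // b i = p} → ℝ := fun s => u s.1 with hxpdef
    have hxpeig : (diagBlock M b p).mulVec xp = μ • xp := by
      funext s
      have h1 : (diagBlock M b p).mulVec xp s = ∑ j : {x // b x = p}, M s.1 j.1 * u j.1 := rfl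
      have h2 : ∑ j : {x // b x = p}, M s.1 j.1 * u j.1
          = ∑ j ∈ Finset.univ.filter (fun j => b j = p), M s.1 j * u j :=
        (Finset.sum_subtype (p := fun x => b x = p) _ (fun x => by simp)
          (fun j => M s.1 j * u j)).symm
      rw [h1, h2, hublock s.1 s.2]
      simp [hxpdef, smul_eq_mul]
    have hxpne : xp ≠ 0 := by
      intro h
      apply hui1
      have := congrFun h ⟨i1, hi1⟩
      simpa [hxpdef] using this
    obtain ⟨hmueq, c, hc, hxy⟩ := prim_unique (diagBlock M b p) hAp0 k hk hkpos
      lam μ yp xp hyppos hypeig (fun s => hu0 s.1) hxpne hxpeig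
    have hup2 : ∀ i, b i = p → u i = c * vPF i := by
      intro i hi
      have := congrFun hxy ⟨i, hi⟩
      simpa [hxpdef, hypdef, smul_eq_mul] using this
    have hwp : ∀ i, b i = p → w i = 0 := by
      intro i hi
      by_contra h
      have h1 := hwsupp i h
      rw [hi] at h1
      exact h1.1 rfl
    set v : Fin n → ℝ := vPF + w with hv
    set z : Fin n → ℝ := fun i => u i - c * v i with hz
    have hveig : M.mulVec v = lam • v := hMv
    have hzeig : M.mulVec z = lam • z := by
      have hz2 : z = u - c • v := by
        funext i; simp [hz, smul_eq_mul]
      rw [hz2, Matrix.mulVec_sub, Matrix.mulVec_smul, hueig, hveig, hmueq, smul_sub,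
        smul_comm]
    have hzsupp : ∀ i, z i ≠ 0 → Succ M b p (b i) := by
      intro i hi
      by_cases hbi : b i = p
      · exfalso
        apply hi
        rw [hz]
        dsimp only
        rw [hup2 i hbi, hv]
        simp only [Pi.add_apply]
        rw [hwp i hbi]
        ring
      · rcases eq_or_ne (u i) 0 with hu | hu
        · have hvne2 : v i ≠ 0 := by
            intro h
            apply hi
            rw [hz]
            dsimp only
            rw [hu, h, mul_zero, sub_zero]
          rw [hv] at hvne2
          simp only [Pi.add_apply] at hvne2
          rw [hvPFz i hbi, zero_add] at hvne2
          exact hwsupp i hvne2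
        · rcases husupp i hu with h | h
          · exact absurd h hbi
          · exact h
    have hzpow := pow_mulVec_eig M z lam hzeig
    have hzzero : ∀ i, z i = 0 := by
      intro i
      set Z : ℝ := ∑ j, |z j| with hZdef
      have hZ0 : 0 ≤ Z := Finset.sum_nonneg fun j _ => abs_nonneg _
      have hb1 : ∀ t : ℕ, lam ^ t * |z i| ≤ C * rr ^ t * Z := by
        intro t
        have h1 : lam ^ t * z i = ∑ j, (M ^ t) i j * z j := by
          have := congrFun (hzpow t) i
          rw [hmv] at this
          rw [this]
          simp [smul_eq_mul]
        have h2 : lam ^ t * |z i| = |∑ j, (M ^ t) i j * z j| := by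
          rw [← h1, abs_mul, abs_of_pos (pow_pos hlam t)]
        rw [h2]
        calc |∑ j, (M ^ t) i j * z j| ≤ ∑ j, |(M ^ t) i j * z j| :=
              Finset.abs_sum_le_sum_abs _ _
          _ = ∑ j, (M ^ t) i j * |z j| := by
              refine Finset.sum_congr rfl fun j _ => ?_
              rw [abs_mul, abs_of_nonneg (matpow_nonneg M hM0 t i j)]
          _ ≤ ∑ j, C * rr ^ t * |z j| := by
              refine Finset.sum_le_sum fun j _ => ?_
              rcases eq_or_ne (z j) 0 with h | h
              · rw [h]; simp
              · exact mul_le_mul_of_nonneg_right (hQb t i j (hzsupp j h)) (abs_nonneg _)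
          _ = C * rr ^ t * Z := by rw [← Finset.mul_sum, hZdef]
      have hb2 : ∀ t : ℕ, |z i| ≤ (C * Z) * (rr / lam) ^ t := by
        intro t
        have h2 : |z i| * lam ^ t ≤ C * Z * rr ^ t := by
          calc |z i| * lam ^ t = lam ^ t * |z i| := by ring
            _ ≤ C * rr ^ t * Z := hb1 t
            _ = C * Z * rr ^ t := by ring
        have h3 := (le_div_iff₀ (pow_pos hlam t)).mpr h2
        calc |z i| ≤ C * Z * rr ^ t / lam ^ t := h3
          _ = C * Z * (rr / lam) ^ t := by rw [div_pow]; ring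
      have hto : Tendsto (fun t : ℕ => (C * Z) * (rr / lam) ^ t) atTop (nhds 0) := by
        have h1 : Tendsto (fun t : ℕ => (rr / lam) ^ t) atTop (nhds 0) :=
          tendsto_pow_atTop_nhds_zero_of_lt_one (div_nonneg hrr0 hlam.le)
            ((div_lt_one hlam).mpr hrrlt)
        have h2 := h1.const_mul (C * Z)
        simpa using h2
      have h3 : |z i| ≤ 0 := ge_of_tendsto hto (Filter.Eventually.of_forall hb2)
      exact abs_eq_zero.mp (le_antisymm h3 (abs_nonneg _))
    refine ⟨c, hc, funext fun i => ?_⟩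
    have := hzzero i
    rw [hz] at this
    dsimp only at this
    have h4 : u i = c * v i := by linarith
    rw [h4]
    simp [hv, smul_eq_mul]
end
end

section
/- Let M₀ be a non-negative integer square matrix in PB-Frobenius form which is expanding, and let M₁ = M₀^k be a positive power of M₀ that is in primitive Frobenius form. Then every non-negative eigenvector of M₁ is also an eigenvector of M₀. -/
open Filter Matrix

noncomputable section

section AuxStatement12
open Finset


lemma nat_sum_eq_one {ι : Type*} [Fintype ι] [DecidableEq ι] {f : ι → ℕ} (h : ∑ i, f i = 1) :
    ∃ a, f a = 1 ∧ ∀ b, b ≠ a → f b = 0 := by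
  have hex : ∃ a, f a ≠ 0 := by
    by_contra hc
    push_neg at hc
    simp [hc] at h
  obtain ⟨a, ha⟩ := hex
  have h1 : f a ≤ 1 := h ▸ Finset.single_le_sum (fun i _ => Nat.zero_le _) (mem_univ a)
  have hfa : f a = 1 := by omega
  refine ⟨a, hfa, fun b hb => ?_⟩
  have := Finset.add_sum_erase Finset.univ f (mem_univ a)
  have hz : ∑ x ∈ Finset.univ.erase a, f x = 0 := by omega
  have := (Finset.sum_eq_zero_iff).mp hz b (by simp [hb])
  exact this

lemma per_mod {α : Type*} (f : ℕ → α) (k : ℕ) (h : ∀ t, f (t + k) = f t) :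
    ∀ t, f t = f (t % k) := by
  have key : ∀ q r, f (r + k * q) = f r := by
    intro q
    induction q with
    | zero => simp
    | succ q ih =>
      intro r
      have : r + k * (q + 1) = (r + k * q) + k := by ring
      rw [this, h, ih]
  intro t
  conv_lhs => rw [← Nat.mod_add_div t k]
  exact key _ _

lemma pow_entry_nonneg {ι : Type*} [Fintype ι] [DecidableEq ι] {A : Matrix ι ι ℝ}
    (hA : ∀ i j, 0 ≤ A i j) : ∀ t i j, 0 ≤ (A ^ t) i j := by
  intro t
  induction t with
  | zero => intro i j; rw [pow_zero]; by_cases h : i = j <;> simp [Matrix.one_apply, h]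
  | succ t ih =>
    intro i j
    rw [pow_succ, Matrix.mul_apply]
    exact Finset.sum_nonneg fun l _ => mul_nonneg (ih i l) (hA l j)

lemma mulVec_entry_nonneg {ι : Type*} [Fintype ι] {A : Matrix ι ι ℝ}
    (hA : ∀ i j, 0 ≤ A i j) {x : ι → ℝ} (hx : ∀ i, 0 ≤ x i) : ∀ i, 0 ≤ A.mulVec x i :=
  fun i => Finset.sum_nonneg fun l _ => mul_nonneg (hA i l) (hx l)

lemma mulVec_mono {ι : Type*} [Fintype ι] {A : Matrix ι ι ℝ}
    (hA : ∀ i j, 0 ≤ A i j) {x y : ι → ℝ} (h : ∀ i, x i ≤ y i) :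
    ∀ i, A.mulVec x i ≤ A.mulVec y i := by
  intro i
  exact Finset.sum_le_sum fun l _ => mul_le_mul_of_nonneg_left (h l) (hA i l)

lemma mul_triangular {ι : Type*} [Fintype ι] {m : ℕ} {M N : Matrix ι ι ℝ} {b : ι → Fin m}
    (hM : ∀ i j, b i < b j → M i j = 0) (hN : ∀ i j, b i < b j → N i j = 0) :
    ∀ i j, b i < b j → (M * N) i j = 0 := by
  intro i j hij
  rw [Matrix.mul_apply]
  refine Finset.sum_eq_zero fun l _ => ?_
  rcases lt_or_ge (b i) (b l) with h2 | h2
  · rw [hM i l h2, zero_mul]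
  · rw [hN l j (lt_of_le_of_lt h2 hij), mul_zero]

lemma pow_triangular {ι : Type*} [Fintype ι] [DecidableEq ι] {m : ℕ} {M : Matrix ι ι ℝ}
    {b : ι → Fin m} (hM : ∀ i j, b i < b j → M i j = 0) (t : ℕ) :
    ∀ i j, b i < b j → (M ^ t) i j = 0 := by
  induction t with
  | zero =>
    intro i j hij
    rw [pow_zero]
    exact Matrix.one_apply_ne (fun h => by subst h; exact lt_irrefl _ hij)
  | succ t ih =>
    rw [pow_succ]
    exact mul_triangular ih hM
lemma diagBlock_mul {ι : Type*} [Fintype ι] [DecidableEq ι] {m : ℕ} {M N : Matrix ι ι ℝ}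
    {b : ι → Fin m} (hM : ∀ i j, b i < b j → M i j = 0) (hN : ∀ i j, b i < b j → N i j = 0)
    (p : Fin m) : diagBlock (M * N) b p = diagBlock M b p * diagBlock N b p := by
  ext i j
  show (M * N) i.1 j.1 = ∑ l : {l // b l = p}, M i.1 l.1 * N l.1 j.1
  rw [Matrix.mul_apply]
  rw [← Finset.sum_subtype (Finset.univ.filter (fun l => b l = p)) (by simp)
    (fun l => M i.1 l * N l j.1)]
  refine (Finset.sum_filter_of_ne fun l _ hl => ?_).symm
  by_contra hlp
  rcases lt_or_gt_of_ne (show b l ≠ p from hlp) with h | h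
  · rw [hN l j.1 (by rw [j.2]; exact h), mul_zero] at hl; exact hl rfl
  · rw [hM i.1 l (by rw [i.2]; exact h), zero_mul] at hl; exact hl rfl

lemma diagBlock_pow {ι : Type*} [Fintype ι] [DecidableEq ι] {m : ℕ} {M : Matrix ι ι ℝ}
    {b : ι → Fin m} (hM : ∀ i j, b i < b j → M i j = 0) (t : ℕ) (p : Fin m) :
    diagBlock (M ^ t) b p = (diagBlock M b p) ^ t := by
  induction t with
  | zero =>
    rw [pow_zero, pow_zero]
    ext i j
    show (1 : Matrix ι ι ℝ) i.1 j.1 = (1 : Matrix _ _ ℝ) i j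
    by_cases h : i = j
    · subst h; simp [Matrix.one_apply]
    · rw [Matrix.one_apply_ne h, Matrix.one_apply_ne (fun hc => h (Subtype.ext hc))]
  | succ t ih =>
    rw [pow_succ, pow_succ, ← ih, diagBlock_mul (pow_triangular hM t) hM]
lemma no_periodic_column {n : ℕ} (N : Matrix (Fin n) (Fin n) ℕ)
    (hcol : ∀ t, 1 ≤ t → ∀ j, ∃ i, (N ^ t) i j ≠ 0)
    (hnofix : ∀ t, 1 ≤ t → ∀ i, ¬ ∀ i', (N ^ t) i' i = if i' = i then 1 else 0)
    (x : Fin n → ℕ) (hx : x ≠ 0) (s : ℕ) (hs : 1 ≤ s)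
    (hfix : (N ^ s).mulVec x = x) : False := by
  have hfix' : ∀ i, ∑ l, (N ^ s) i l * x l = x i := fun i => congrFun hfix i
  have hσ1 : ∀ l, 1 ≤ ∑ i, (N ^ s) i l := by
    intro l
    obtain ⟨i, hi⟩ := hcol s hs l
    rw [Nat.one_le_iff_ne_zero]
    intro hc
    exact hi ((Finset.sum_eq_zero_iff).mp hc i (Finset.mem_univ i))
  have hsum : ∑ l, (∑ i, (N ^ s) i l) * x l = ∑ l, x l := by
    calc ∑ l, (∑ i, (N ^ s) i l) * x l = ∑ l, ∑ i, (N ^ s) i l * x l := by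
          refine Finset.sum_congr rfl fun l _ => ?_
          rw [Finset.sum_mul]
      _ = ∑ i, ∑ l, (N ^ s) i l * x l := Finset.sum_comm
      _ = ∑ l, x l := Finset.sum_congr rfl fun i _ => hfix' i
  have heq : ∀ l, x l = (∑ i, (N ^ s) i l) * x l := by
    intro l
    have hle : ∀ l ∈ Finset.univ, x l ≤ (∑ i, (N ^ s) i l) * x l :=
      fun l _ => Nat.le_mul_of_pos_left (x l) (hσ1 l)
    exact (Finset.sum_eq_sum_iff_of_le hle).mp hsum.symm l (Finset.mem_univ l)
  have hcolone : ∀ i, x i ≠ 0 → ∃ a, (N ^ s) a i = 1 ∧ (∀ b, b ≠ a → (N ^ s) b i = 0) ∧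
      x a ≠ 0 := by
    intro i hi
    have hσi : ∑ i', (N ^ s) i' i = 1 := by
      have h1 := heq i
      have hxi : 0 < x i := Nat.pos_of_ne_zero hi
      nlinarith [hσ1 i]
    obtain ⟨a, ha1, ha0⟩ := nat_sum_eq_one hσi
    refine ⟨a, ha1, ha0, ?_⟩
    have h2 : (N ^ s) a i * x i ≤ ∑ l, (N ^ s) a l * x l :=
      Finset.single_le_sum (f := fun l => (N ^ s) a l * x l)
        (fun l _ => Nat.zero_le _) (Finset.mem_univ i)
    rw [hfix' a, ha1, one_mul] at h2
    have hxi : 0 < x i := Nat.pos_of_ne_zero hi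
    omega
  choose g hg1 hg2 hg3 using hcolone
  obtain ⟨j₀, hj₀⟩ : ∃ i, x i ≠ 0 := Function.ne_iff.mp hx
  let G : {i : Fin n // x i ≠ 0} → {i : Fin n // x i ≠ 0} :=
    fun i => ⟨g i.1 i.2, hg3 i.1 i.2⟩
  have key : ∀ (m : ℕ) (j : {i : Fin n // x i ≠ 0}) (i' : Fin n),
      (N ^ (s * m)) i' j.1 = if i' = (G^[m] j).1 then 1 else 0 := by
    intro m
    induction m with
    | zero =>
      intro j i'
      simp [Matrix.one_apply]
      congr
    | succ m ih =>
      intro j i'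
      have hmul : s * (m + 1) = s + s * m := by ring
      rw [hmul, pow_add, Matrix.mul_apply]
      have hstep : ∑ l, (N ^ s) i' l * (N ^ (s * m)) l j.1
          = (N ^ s) i' (G^[m] j).1 := by
        simp_rw [ih j]
        simp
      rw [hstep, Function.iterate_succ_apply']
      set c := G^[m] j with hc
      show (N ^ s) i' c.1 = if i' = (G c).1 then 1 else 0
      by_cases h : i' = (G c).1
      · rw [if_pos h, h]
        exact hg1 c.1 c.2
      · rw [if_neg h]
        exact hg2 c.1 c.2 i' h
  obtain ⟨a, b, hab, hGab⟩ := Finite.exists_ne_map_eq_of_infinite (fun m : ℕ => G^[m] ⟨j₀, hj₀⟩)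
  wlog hlt : a < b generalizing a b
  · exact this b a hab.symm hGab.symm (by omega)
  set i : {i : Fin n // x i ≠ 0} := G^[a] ⟨j₀, hj₀⟩ with hi
  have hGr : G^[b - a] i = i := by
    have : b - a + a = b := by omega
    rw [hi, ← Function.iterate_add_apply, this]
    exact hGab.symm
  have hr1 : 1 ≤ b - a := by omega
  refine hnofix (s * (b - a)) (Nat.one_le_iff_ne_zero.mpr (by positivity)) i.1 ?_
  intro i'
  rw [key (b - a) i i', hGr]
lemma cast_pow_entry {n : ℕ} (M₀ : Matrix (Fin n) (Fin n) ℝ) (N : Matrix (Fin n) (Fin n) ℕ)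
    (hN : ∀ i j, M₀ i j = (N i j : ℝ)) : ∀ t i j, (M₀ ^ t) i j = ((N ^ t) i j : ℝ) := by
  intro t
  induction t with
  | zero =>
    intro i j
    by_cases h : i = j <;> simp [pow_zero, Matrix.one_apply, h]
  | succ t ih =>
    intro i j
    rw [pow_succ, pow_succ, Matrix.mul_apply, Matrix.mul_apply, Nat.cast_sum]
    exact Finset.sum_congr rfl fun l _ => by rw [ih i l, hN l j, Nat.cast_mul]

lemma mu_gt_one {n : ℕ} (M₀ : Matrix (Fin n) (Fin n) ℝ)
    (hZ : ∀ i j, ∃ z : ℕ, M₀ i j = (z : ℝ)) (hexp : MatExpanding M₀)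
    (k : ℕ) (hk : 1 ≤ k) (v : Fin n → ℝ) (hv : ∀ i, 0 ≤ v i) (hvne : v ≠ 0)
    (μ : ℝ) (heig : (M₀ ^ k).mulVec v = μ • v) : 1 < μ := by
  have hZ' : ∀ i j, ∃ z : ℕ, (Matrix.of fun i j => M₀ i j) i j = (z : ℝ) := hZ
  choose Nf hNf using hZ
  set N : Matrix (Fin n) (Fin n) ℕ := Matrix.of Nf with hNdef
  have hN : ∀ i j, M₀ i j = (N i j : ℝ) := hNf
  have hcast := cast_pow_entry M₀ N hN
  have hMnn : ∀ t i j, (0:ℝ) ≤ (M₀ ^ t) i j := by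
    intro t i j; rw [hcast]; exact Nat.cast_nonneg _
  -- no zero columns
  have hcolN : ∀ t, 1 ≤ t → ∀ j, ∃ i, (N ^ t) i j ≠ 0 := by
    intro t ht j
    by_contra hc
    push_neg at hc
    refine hexp ⟨j, t, ht, Or.inr ?_⟩
    funext i
    have he : (M₀ ^ t *ᵥ Pi.single j 1) i = (M₀ ^ t) i j * 1 :=
      congrFun (Matrix.mulVec_single _ _ _) i
    rw [he, hcast, hc i, Nat.cast_zero, zero_mul]
    rfl
  -- no fixed columns
  have hnofixN : ∀ t, 1 ≤ t → ∀ i, ¬ ∀ i', (N ^ t) i' i = if i' = i then 1 else 0 := by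
    intro t ht i hc
    refine hexp ⟨i, t, ht, Or.inl ?_⟩
    funext i'
    have he : (M₀ ^ t *ᵥ Pi.single i 1) i' = (M₀ ^ t) i' i * 1 :=
      congrFun (Matrix.mulVec_single _ _ _) i'
    rw [he, mul_one, hcast, hc i', Pi.single_apply]
    by_cases h : i' = i <;> simp [h]
  by_contra hμ
  push_neg at hμ
  obtain ⟨j, hj⟩ : ∃ i, v i ≠ 0 := Function.ne_iff.mp hvne
  have hvj : 0 < v j := lt_of_le_of_ne (hv j) (Ne.symm hj)
  have hμ0 : 0 ≤ μ := by
    have h1 : 0 ≤ μ * v j := by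
      have := congrFun heig j
      rw [Pi.smul_apply, smul_eq_mul] at this
      rw [← this]
      exact mulVec_entry_nonneg (hMnn k) hv j
    nlinarith
  have hpowv : ∀ t, (M₀ ^ (k * t)).mulVec v = (μ ^ t) • v := by
    intro t
    induction t with
    | zero => simp [Matrix.one_mulVec]
    | succ t ih =>
      have hkt : k * (t + 1) = k * t + k := by ring
      rw [hkt, pow_add, ← Matrix.mulVec_mulVec, heig, Matrix.mulVec_smul, ih, smul_smul,
        ← pow_succ']
  -- column sum bound
  have hsumv : (0:ℝ) ≤ ∑ l, v l := Finset.sum_nonneg fun l _ => hv l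
  set C : ℕ := ⌊(∑ l, v l) / v j⌋₊ with hC
  have hbound : ∀ t, ∀ i, (N ^ (k * (t + 1))) i j ≤ C := by
    intro t i
    have h1 : ∑ i', (M₀ ^ (k * (t+1))).mulVec v i' = μ ^ (t+1) * ∑ l, v l := by
      rw [hpowv]
      simp [Finset.mul_sum]
    have h2 : ((N ^ (k * (t+1))) i j : ℝ) * v j ≤ ∑ l, v l := by
      have hterm : ((N ^ (k * (t+1))) i j : ℝ) * v j ≤ (M₀ ^ (k * (t+1))).mulVec v i := by
        rw [← hcast]
        exact Finset.single_le_sum (f := fun l => (M₀ ^ (k * (t+1))) i l * v l)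
          (fun l _ => mul_nonneg (hMnn _ i l) (hv l)) (Finset.mem_univ j)
      have hterm2 : (M₀ ^ (k * (t+1))).mulVec v i ≤ ∑ i', (M₀ ^ (k * (t+1))).mulVec v i' :=
        Finset.single_le_sum (f := fun i' => (M₀ ^ (k * (t+1))).mulVec v i')
          (fun i' _ => mulVec_entry_nonneg (hMnn _) hv i') (Finset.mem_univ i)
      have hpow1 : μ ^ (t+1) ≤ 1 := pow_le_one₀ hμ0 hμ
      calc ((N ^ (k * (t+1))) i j : ℝ) * v j ≤ ∑ i', (M₀ ^ (k * (t+1))).mulVec v i' :=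
            le_trans hterm hterm2
        _ = μ ^ (t+1) * ∑ l, v l := h1
        _ ≤ ∑ l, v l := by nlinarith
    apply Nat.le_floor
    rw [le_div_iff₀ hvj]
    exact h2
  -- pigeonhole
  have hfin : ∃ t₁ t₂ : ℕ, t₁ ≠ t₂ ∧
      (fun i => (N ^ (k * (t₁+1))) i j) = (fun i => (N ^ (k * (t₂+1))) i j) := by
    obtain ⟨t₁, t₂, hne, heqF⟩ := Finite.exists_ne_map_eq_of_infinite
      (fun t : ℕ => fun i => (⟨(N ^ (k * (t+1))) i j, Nat.lt_succ_of_le (hbound t i)⟩ : Fin (C+1)))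
    refine ⟨t₁, t₂, hne, funext fun i => ?_⟩
    have h := congrFun heqF i
    exact congrArg Fin.val h
  obtain ⟨t₁, t₂, hne, heqF⟩ := hfin
  wlog hlt : t₁ < t₂ generalizing t₁ t₂
  · exact this t₂ t₁ hne.symm heqF.symm (by omega)
  set a := k * (t₁ + 1) with ha
  set s := k * (t₂ + 1) - a with hs'
  have hsa : s + a = k * (t₂ + 1) := by
    have : a ≤ k * (t₂ + 1) := Nat.mul_le_mul_left k (by omega)
    omega
  have hs1 : 1 ≤ s := by
    have h1 : a + k = k * (t₁ + 2) := by ring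
    have h2 : k * (t₁ + 2) ≤ k * (t₂ + 1) := Nat.mul_le_mul_left k (by omega)
    omega
  set x : Fin n → ℕ := fun i => (N ^ a) i j with hx'
  have hxne : x ≠ 0 := by
    obtain ⟨i, hi⟩ := hcolN a (Nat.one_le_iff_ne_zero.mpr (Nat.mul_ne_zero (by omega) (by omega))) j
    exact Function.ne_iff.mpr ⟨i, hi⟩
  refine no_periodic_column N hcolN hnofixN x hxne s hs1 ?_
  funext i
  show ∑ l, (N ^ s) i l * (N ^ a) l j = (N ^ a) i j
  rw [← Matrix.mul_apply, ← pow_add, hsa]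
  exact (congrFun heqF.symm i : _)
lemma rec_iterate {ι : Type*} [Fintype ι] [DecidableEq ι] (A : Matrix ι ι ℝ)
    (E : ℕ → ι → ℝ) (hrec : ∀ t, E (t + 1) = A.mulVec (E t)) :
    ∀ t s, E (t + s) = (A ^ s).mulVec (E t) := by
  intro t s
  induction s with
  | zero => simp [Matrix.one_mulVec]
  | succ s ih =>
    rw [← Nat.add_assoc, hrec, ih, Matrix.mulVec_mulVec, ← pow_succ']

lemma per_add {α : Type*} (f : ℕ → α) (k : ℕ) (h : ∀ t, f (t + k) = f t) :
    ∀ m t, f (t + k * m) = f t := by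
  intro m
  induction m with
  | zero => simp
  | succ m ih =>
    intro t
    have : t + k * (m + 1) = (t + k * m) + k := by ring
    rw [this, h, ih]

lemma pb_kill {ι : Type*} [Fintype ι] [DecidableEq ι] (B : Matrix ι ι ℝ)
    (hBnn : ∀ s, 1 ≤ s → ∀ i j, 0 ≤ (B ^ s) i j)
    (C : ℝ) (hC : ∀ s, 1 ≤ s → ∀ i j, (B ^ s) i j ≤ C)
    (lam : ℝ) (hlam : 1 < lam) (k : ℕ) (hk : 1 ≤ k)
    (E : ℕ → ι → ℝ) (hrec : ∀ t, E (t + 1) = lam⁻¹ • B.mulVec (E t))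
    (hper : ∀ t, E (t + k) = E t) : ∀ t i, E t i = 0 := by
  have hlam0 : 0 < lam := lt_trans one_pos hlam
  have hit : ∀ t s, E (t + s) = (lam⁻¹) ^ s • (B ^ s).mulVec (E t) := by
    intro t s
    induction s with
    | zero => simp [Matrix.one_mulVec]
    | succ s ih =>
      rw [← Nat.add_assoc, hrec, ih, Matrix.mulVec_smul, Matrix.mulVec_mulVec, ← pow_succ',
        smul_smul, ← pow_succ']
  intro t i
  by_contra hne
  set S : ℝ := ∑ j, |E t j| with hS
  set C' : ℝ := max C 0 with hC'
  have hSnn : 0 ≤ S := Finset.sum_nonneg fun j _ => abs_nonneg _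
  have hEbound : ∀ m, 1 ≤ m → |E t i| ≤ (lam ^ (k * m))⁻¹ * (C' * S) := by
    intro m hm
    have hkm : 1 ≤ k * m := Nat.one_le_iff_ne_zero.mpr (Nat.mul_ne_zero (by omega) (by omega))
    have h1 : E t i = (lam⁻¹) ^ (k * m) * ((B ^ (k * m)).mulVec (E t) i) := by
      have h0 := hit t (k * m)
      rw [per_add E k hper m t] at h0
      have h0' := congrFun h0 i
      simpa using h0'
    have h2 : |(B ^ (k * m)).mulVec (E t) i| ≤ C' * S := by
      calc |∑ j, (B ^ (k * m)) i j * E t j| ≤ ∑ j, |(B ^ (k * m)) i j * E t j| :=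
            Finset.abs_sum_le_sum_abs _ _
        _ ≤ ∑ j, C' * |E t j| := by
            refine Finset.sum_le_sum fun j _ => ?_
            rw [abs_mul, abs_of_nonneg (hBnn _ hkm i j)]
            exact mul_le_mul_of_nonneg_right
              (le_trans (hC _ hkm i j) (le_max_left C 0)) (abs_nonneg _)
        _ = C' * S := by rw [← Finset.mul_sum]
    rw [h1, abs_mul, abs_of_nonneg (by positivity : (0:ℝ) ≤ (lam⁻¹) ^ (k * m)), inv_pow]
    exact mul_le_mul_of_nonneg_left h2 (by positivity)
  obtain ⟨m₀, hm₀⟩ := pow_unbounded_of_one_lt (C' * S / |E t i|) hlam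
  have habs : 0 < |E t i| := abs_pos.mpr hne
  have hm1 : m₀ ≤ k * (m₀ + 1) := by nlinarith
  have hpow2 : lam ^ m₀ ≤ lam ^ (k * (m₀ + 1)) := pow_le_pow_right₀ (le_of_lt hlam) hm1
  have hCS : C' * S < lam ^ (k * (m₀ + 1)) * |E t i| := by
    rw [div_lt_iff₀ habs] at hm₀
    nlinarith [pow_pos hlam0 m₀]
  have hfin := hEbound (m₀ + 1) (by omega)
  have hp : (0:ℝ) < lam ^ (k * (m₀ + 1)) := pow_pos hlam0 _
  have h3 : lam ^ (k * (m₀ + 1)) * |E t i| ≤ C' * S := by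
    calc lam ^ (k * (m₀ + 1)) * |E t i|
        ≤ lam ^ (k * (m₀ + 1)) * ((lam ^ (k * (m₀ + 1)))⁻¹ * (C' * S)) :=
          mul_le_mul_of_nonneg_left hfin (le_of_lt hp)
      _ = C' * S := by field_simp
  linarith
lemma hopf_kill {ι : Type*} [Fintype ι] [DecidableEq ι] (A : Matrix ι ι ℝ)
    (hA : ∀ i j, 0 ≤ A i j) (t₀ : ℕ) (hpos : ∀ i j, 0 < (A ^ t₀) i j)
    (r : ι → ℝ) (hr : ∀ i, 0 < r i) (hAr : ∀ i, A.mulVec r i ≤ r i)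
    (k : ℕ) (hk : 1 ≤ k) (E : ℕ → ι → ℝ)
    (hrec : ∀ t, E (t + 1) = A.mulVec (E t))
    (hper : ∀ t, E (t + k) = E t)
    (hsum : ∀ i, ∑ t ∈ Finset.range k, E t i = 0) : ∀ t i, E t i = 0 := by
  rcases isEmpty_or_nonempty ι with hι | hι
  · exact fun t i => (hι.false i).elim
  have hApow : ∀ s i j, 0 ≤ (A ^ s) i j := fun s => pow_entry_nonneg hA s
  have hit : ∀ t s, E (t + s) = (A ^ s).mulVec (E t) := rec_iterate A E hrec
  have hArpow : ∀ s i, (A ^ s).mulVec r i ≤ r i := by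
    intro s
    induction s with
    | zero => intro i; rw [pow_zero, Matrix.one_mulVec]
    | succ s ih =>
      intro i
      rw [pow_succ', ← Matrix.mulVec_mulVec]
      exact le_trans (mulVec_mono hA ih i) (hAr i)
  have hperm : ∀ t, E t = E (t % k) := per_mod E k hper
  have hne : ((Finset.range k) ×ˢ (Finset.univ : Finset ι)).Nonempty :=
    Finset.Nonempty.product ⟨0, Finset.mem_range.mpr (by omega)⟩ Finset.univ_nonempty
  set D : ℝ := ((Finset.range k) ×ˢ (Finset.univ : Finset ι)).sup' hne (fun p => E p.1 p.2 / r p.2) with hD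
  have hDle : ∀ t i, E t i ≤ D * r i := by
    have hlt : ∀ t i, t < k → E t i ≤ D * r i := by
      intro t i ht
      have hmem : (t, i) ∈ (Finset.range k) ×ˢ (Finset.univ : Finset ι) :=
        Finset.mem_product.mpr ⟨Finset.mem_range.mpr ht, Finset.mem_univ i⟩
      have := Finset.le_sup' (fun p : ℕ × ι => E p.1 p.2 / r p.2) hmem
      rw [div_le_iff₀ (hr i)] at this
      linarith [this]
    intro t i
    rw [hperm t]
    exact hlt _ i (Nat.mod_lt t (by omega))
  rcases le_or_gt D 0 with hD0 | hD0
  · -- everything nonpositive, sum zero forces zero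
    have hnp : ∀ t i, E t i ≤ 0 := fun t i =>
      le_trans (hDle t i) (mul_nonpos_iff.mpr (Or.inr ⟨hD0, le_of_lt (hr i)⟩))
    intro t i
    rw [hperm t]
    have := (Finset.sum_eq_zero_iff_of_nonpos (fun t _ => hnp t i)).mp (hsum i)
    exact this _ (Finset.mem_range.mpr (Nat.mod_lt t (by omega)))
  · -- D > 0 : derive a contradiction
    exfalso
    obtain ⟨⟨ts, is⟩, hmem, hDeq⟩ := Finset.exists_mem_eq_sup' hne (fun p : ℕ × ι => E p.1 p.2 / r p.2)
    have hts : ts < k := Finset.mem_range.mp (Finset.mem_product.mp hmem).1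
    have hEts : E ts is = D * r is := by
      have : E ts is / r is = D := hDeq.symm
      rw [div_eq_iff (ne_of_gt (hr is))] at this
      linarith [this]
    have hEt : ∀ j, E ts j = D * r j := by
      by_contra hc
      push_neg at hc
      obtain ⟨j, hj⟩ := hc
      have hjlt : E ts j < D * r j := lt_of_le_of_ne (hDle ts j) hj
      have hstrict : ∀ i, E (ts + t₀) i < D * r i := by
        intro i
        rw [hit ts t₀]
        have hcalc : (A ^ t₀).mulVec (E ts) i < ∑ l, (A ^ t₀) i l * (D * r l) := by
          refine Finset.sum_lt_sum (fun l _ =>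
            mul_le_mul_of_nonneg_left (hDle ts l) (hApow t₀ i l)) ⟨j, Finset.mem_univ j, ?_⟩
          exact mul_lt_mul_of_pos_left hjlt (hpos i j)
        have heq2 : ∑ l, (A ^ t₀) i l * (D * r l) = D * ((A ^ t₀).mulVec r i) := by
          have h5 : (A ^ t₀).mulVec r i = ∑ l, (A ^ t₀) i l * r l := rfl
          rw [h5, Finset.mul_sum]
          exact Finset.sum_congr rfl fun l _ => by ring
        calc (A ^ t₀).mulVec (E ts) i < D * ((A ^ t₀).mulVec r i) := heq2 ▸ hcalc
          _ ≤ D * r i := mul_le_mul_of_nonneg_left (hArpow t₀ i) (le_of_lt hD0)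
      set x : ℝ := max ((Finset.univ : Finset ι).sup' Finset.univ_nonempty (fun i : ι => E (ts + t₀) i / r i)) 0 with hx
      have hx0 : 0 ≤ x := le_max_right _ _
      have hxle : ∀ i, E (ts + t₀) i ≤ x * r i := by
        intro i
        have h1 : E (ts + t₀) i / r i ≤ x :=
          le_trans (Finset.le_sup' (fun i : ι => E (ts + t₀) i / r i) (Finset.mem_univ i))
            (le_max_left _ _)
        rw [div_le_iff₀ (hr i)] at h1
        linarith
      have hxD : x < D := by
        rw [hx, max_lt_iff]
        constructor
        · rw [Finset.sup'_lt_iff]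
          intro i _
          rw [div_lt_iff₀ (hr i)]
          linarith [hstrict i]
        · exact hD0
      have hmono : ∀ s i, E (ts + t₀ + s) i ≤ x * r i := by
        intro s
        induction s with
        | zero => exact hxle
        | succ s ih =>
          intro i
          have : ts + t₀ + (s + 1) = (ts + t₀ + s) + 1 := by ring
          rw [this, hrec]
          calc A.mulVec (E (ts + t₀ + s)) i ≤ ∑ l, A i l * (x * r l) :=
                Finset.sum_le_sum (fun l _ => mul_le_mul_of_nonneg_left (ih l) (hA i l))
            _ = x * (A.mulVec r i) := by
                have h5 : A.mulVec r i = ∑ l, A i l * r l := rfl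
                rw [h5, Finset.mul_sum]
                exact Finset.sum_congr rfl fun l _ => by ring
            _ ≤ x * r i := mul_le_mul_of_nonneg_left (hAr i) hx0
      have hwrap : t₀ + (k * (t₀ + 1) - t₀) = k * (t₀ + 1) := by
        have : t₀ + 1 ≤ k * (t₀ + 1) := Nat.le_mul_of_pos_left _ (by omega)
        omega
      have hend : E ts is ≤ x * r is := by
        have h1 := hmono (k * (t₀ + 1) - t₀) is
        rw [Nat.add_assoc, hwrap, per_add E k hper (t₀ + 1) ts] at h1
        exact h1
      rw [hEts] at hend
      have : D ≤ x := le_of_mul_le_mul_right (by linarith) (hr is)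
      linarith
    -- now E ts = D • r, hence all E t are nonnegative
    have hnonneg : ∀ t, t < k → ∀ i, 0 ≤ E t i := by
      intro t ht i
      have hs : ts + (t + k - ts) = t + k := by omega
      have h1 : E t i = E (ts + (t + k - ts)) i := by
        rw [hs, hper]
      rw [h1, hit ts (t + k - ts)]
      have h2 : E ts = fun j => D * r j := funext hEt
      rw [h2]
      have h3 : (fun j => D * r j) = D • r := by funext j; simp
      rw [h3, Matrix.mulVec_smul]
      have : 0 ≤ (A ^ (t + k - ts)).mulVec r i :=
        mulVec_entry_nonneg (hApow _) (fun l => le_of_lt (hr l)) i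
      simpa using mul_nonneg (le_of_lt hD0) this
    have hzero := (Finset.sum_eq_zero_iff_of_nonneg
      (fun t ht => hnonneg t (Finset.mem_range.mp ht) is)).mp (hsum is)
    have := hzero ts (Finset.mem_range.mpr hts)
    rw [hEts] at this
    nlinarith [hr is]

end AuxStatement12

/-- If `M₀` is expanding and in PB-Frobenius form, and the positive power `M₀^k` is in
primitive Frobenius form, then every non-negative eigenvector of `M₀^k` is also an
eigenvector of `M₀`. -/
theorem statement12 {n : ℕ} (M₀ : Matrix (Fin n) (Fin n) ℝ)
    (hZ : ∀ i j, ∃ z : ℕ, M₀ i j = (z : ℝ))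
    (hPB : IsPBFrobenius M₀) (hexp : MatExpanding M₀)
    (k : ℕ) (hk : 1 ≤ k) (hPF : IsPrimFrobenius (M₀ ^ k))
    (v : Fin n → ℝ) (hv : ∀ i, 0 ≤ v i) (hvne : v ≠ 0)
    (μ : ℝ) (heig : (M₀ ^ k).mulVec v = μ • v) :
    ∃ μ₀ : ℝ, M₀.mulVec v = μ₀ • v := by
  obtain ⟨m₀, c, htri, hblocks⟩ := hPB
  have hkpos : 0 < k := hk
  have hμ : 1 < μ := mu_gt_one M₀ hZ hexp k hk v hv hvne μ heig
  have hμ0 : (0:ℝ) < μ := by linarith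
  choose Nf hNf using hZ
  have hMnn : ∀ t i j, (0:ℝ) ≤ (M₀ ^ t) i j := by
    intro t i j
    rw [cast_pow_entry M₀ (Matrix.of Nf) hNf t i j]
    exact Nat.cast_nonneg _
  have hM0nn : ∀ i j, 0 ≤ M₀ i j := by
    intro i j
    have := hMnn 1 i j
    rwa [pow_one] at this
  -- the k-th root of μ
  set lam : ℝ := μ ^ ((k:ℝ))⁻¹ with hlamdef
  have hlam : 1 < lam :=
    (Real.one_lt_rpow_iff_of_pos hμ0).mpr (Or.inl ⟨hμ, by positivity⟩)
  have hlam0 : (0:ℝ) < lam := lt_trans one_pos hlam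
  have hlamk : lam ^ k = μ := by
    rw [hlamdef, ← Real.rpow_natCast (μ ^ ((k:ℝ))⁻¹) k, ← Real.rpow_mul (le_of_lt hμ0),
      inv_mul_cancel₀ (by positivity : (k:ℝ) ≠ 0), Real.rpow_one]
  -- the renormalized orbit
  set vt : ℕ → Fin n → ℝ := fun t => (lam ^ t)⁻¹ • (M₀ ^ t).mulVec v with hvt
  have hvt0 : vt 0 = v := by
    show (lam ^ 0)⁻¹ • (M₀ ^ 0).mulVec v = v
    simp [Matrix.one_mulVec]
  have hvtsucc : ∀ t, vt (t + 1) = lam⁻¹ • M₀.mulVec (vt t) := by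
    intro t
    show (lam ^ (t+1))⁻¹ • (M₀ ^ (t+1)).mulVec v
      = lam⁻¹ • M₀.mulVec ((lam ^ t)⁻¹ • (M₀ ^ t).mulVec v)
    rw [Matrix.mulVec_smul, smul_smul, Matrix.mulVec_mulVec, ← pow_succ', ← mul_inv,
      ← pow_succ']
  have hvtper : ∀ t, vt (t + k) = vt t := by
    intro t
    show (lam ^ (t+k))⁻¹ • (M₀ ^ (t+k)).mulVec v = (lam ^ t)⁻¹ • (M₀ ^ t).mulVec v
    have hMsplit : (M₀ ^ (t + k)).mulVec v = (M₀ ^ t).mulVec ((M₀ ^ k).mulVec v) := by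
      rw [Matrix.mulVec_mulVec, ← pow_add]
    rw [hMsplit, heig, Matrix.mulVec_smul, smul_smul]
    congr 1
    rw [pow_add, hlamk]
    field_simp
  have hvtnn : ∀ t i, 0 ≤ vt t i := by
    intro t i
    show 0 ≤ ((lam ^ t)⁻¹ • (M₀ ^ t).mulVec v) i
    have h1 : (0:ℝ) ≤ (lam ^ t)⁻¹ := by positivity
    exact mul_nonneg h1 (mulVec_entry_nonneg (hMnn t) hv i)
  have hMvt : ∀ t, M₀.mulVec (vt t) = lam • vt (t + 1) := by
    intro t
    rw [hvtsucc t, smul_smul, mul_inv_cancel₀ (ne_of_gt hlam0), one_smul]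
  -- the difference sequence
  set d : ℕ → Fin n → ℝ := fun t => vt (t + 1) - vt t with hd
  have hdrec : ∀ t, d (t + 1) = lam⁻¹ • M₀.mulVec (d t) := by
    intro t
    show vt (t + 1 + 1) - vt (t + 1) = lam⁻¹ • M₀.mulVec (vt (t + 1) - vt t)
    rw [Matrix.mulVec_sub, smul_sub, ← hvtsucc (t + 1), ← hvtsucc t]
  have hdper : ∀ t, d (t + k) = d t := by
    intro t
    show vt (t + k + 1) - vt (t + k) = vt (t + 1) - vt t
    have h1 : t + k + 1 = (t + 1) + k := by ring
    rw [h1, hvtper, hvtper]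
  have hdsum : ∀ i, ∑ t ∈ Finset.range k, d t i = 0 := by
    intro i
    have h1 : ∑ t ∈ Finset.range k, (vt (t + 1) i - vt t i) = vt k i - vt 0 i :=
      Finset.sum_range_sub (fun t => vt t i) k
    have h2 : vt k i = vt 0 i := by
      have h3 := hvtper 0
      rw [Nat.zero_add] at h3
      rw [h3]
    show ∑ t ∈ Finset.range k, (vt (t + 1) i - vt t i) = 0
    rw [h1, h2, sub_self]
  -- the eigenvector u of M₀
  set u : Fin n → ℝ := fun i => ∑ t ∈ Finset.range k, vt t i with hu
  have hunn : ∀ i, 0 ≤ u i := fun i => Finset.sum_nonneg fun t _ => hvtnn t i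
  have hshift : ∀ i, ∑ t ∈ Finset.range k, vt (t + 1) i = ∑ t ∈ Finset.range k, vt t i := by
    intro i
    have h1 := Finset.sum_range_succ' (fun t => vt t i) k
    have h2 := Finset.sum_range_succ (fun t => vt t i) k
    have h3 : vt k i = vt 0 i := by
      have h4 := hvtper 0
      rw [Nat.zero_add] at h4
      rw [h4]
    simp only [h3] at h2
    linarith
  have hMu : M₀.mulVec u = lam • u := by
    funext i
    show ∑ l, M₀ i l * u l = lam * u i
    calc ∑ l, M₀ i l * u l = ∑ l, ∑ t ∈ Finset.range k, M₀ i l * vt t l := by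
          refine Finset.sum_congr rfl fun l _ => ?_
          show M₀ i l * ∑ t ∈ Finset.range k, vt t l = _
          rw [Finset.mul_sum]
      _ = ∑ t ∈ Finset.range k, ∑ l, M₀ i l * vt t l := Finset.sum_comm
      _ = ∑ t ∈ Finset.range k, lam * vt (t + 1) i := by
          refine Finset.sum_congr rfl fun t _ => ?_
          have h5 := congrFun (hMvt t) i
          exact h5
      _ = lam * ∑ t ∈ Finset.range k, vt (t + 1) i := by rw [Finset.mul_sum]
      _ = lam * u i := by rw [hshift i]
  have hMtu : ∀ s, (M₀ ^ s).mulVec u = (lam ^ s) • u := by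
    intro s
    induction s with
    | zero => simp [Matrix.one_mulVec]
    | succ s ih =>
      rw [pow_succ', ← Matrix.mulVec_mulVec, ih, Matrix.mulVec_smul, hMu, smul_smul,
        ← pow_succ]
  -- the block induction
  have main : ∀ (pn : ℕ) (p : Fin m₀), (p : ℕ) = pn → ∀ t i, c i = p → d t i = 0 := by
    intro pn
    induction pn using Nat.strong_induction_on with
    | _ pn IH =>
      intro p hp
      have IH' : ∀ l : Fin n, c l < p → ∀ t, d t l = 0 := by
        intro l hl t
        exact IH ((c l) : ℕ) (by rw [← hp]; exact Fin.lt_def.mp hl) (c l) rfl t l rfl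
      set B := diagBlock M₀ c p with hB
      have hBentry : ∀ (a b : {l : Fin n // c l = p}), B a b = M₀ a.1 b.1 := fun a b => rfl
      have hdiagEq : ∀ s (a b : {l : Fin n // c l = p}), (B ^ s) a b = (M₀ ^ s) a.1 b.1 := by
        intro s a b
        rw [hB, ← diagBlock_pow htri s p]
        rfl
      set E : ℕ → {l : Fin n // c l = p} → ℝ := fun t l => d t l.1 with hE
      have hsumJ : ∀ (y : Fin n → ℝ), (∀ l, c l < p → y l = 0) →
          ∀ (i : {l : Fin n // c l = p}),
            ∑ l, M₀ i.1 l * y l = ∑ l : {l : Fin n // c l = p}, M₀ i.1 l.1 * y l.1 := by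
        intro y hy i
        rw [← Finset.sum_subtype (Finset.univ.filter (fun l => c l = p)) (by simp)
          (fun l => M₀ i.1 l * y l)]
        refine (Finset.sum_filter_of_ne fun l _ hl => ?_).symm
        by_contra hlp
        rcases lt_or_gt_of_ne (show c l ≠ p from hlp) with h | h
        · rw [hy l h, mul_zero] at hl; exact hl rfl
        · rw [htri i.1 l (by rw [i.2]; exact h), zero_mul] at hl; exact hl rfl
      have hrecE : ∀ t, E (t + 1) = (lam⁻¹ • B).mulVec (E t) := by
        intro t
        funext i
        show d (t + 1) i.1 = ((lam⁻¹ • B).mulVec (E t)) i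
        have h1 : d (t + 1) i.1 = lam⁻¹ * (M₀.mulVec (d t) i.1) := by
          rw [hdrec t]; rfl
        have h2 : M₀.mulVec (d t) i.1 = ∑ l, M₀ i.1 l * d t l := rfl
        have h3 : ((lam⁻¹ • B).mulVec (E t)) i
            = ∑ l : {l : Fin n // c l = p}, lam⁻¹ * B i l * E t l := by
          show ∑ l : {l : Fin n // c l = p}, (lam⁻¹ • B) i l * E t l = _
          refine Finset.sum_congr rfl fun l _ => ?_
          rw [Matrix.smul_apply, smul_eq_mul]
        rw [h1, h2, hsumJ (d t) (fun l hl => IH' l hl t) i, h3, Finset.mul_sum]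
        refine Finset.sum_congr rfl fun l _ => ?_
        rw [hBentry, mul_assoc]
      have hperE : ∀ t, E (t + k) = E t := fun t => funext fun i => congrFun (hdper t) i.1
      have hsumE : ∀ i : {l : Fin n // c l = p}, ∑ t ∈ Finset.range k, E t i = 0 :=
        fun i => hdsum i.1
      have hEzero : ∀ t l, E t l = 0 := by
        rcases hblocks p with hprim | hpb
        · obtain ⟨t₀, ht₀pos, ht₀⟩ := hprim
          by_cases hup : ∀ i : {l : Fin n // c l = p}, u i.1 = 0
          · intro t l
            have hvtz : ∀ s, vt s l.1 = 0 := by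
              have hlt : ∀ s, s < k → vt s l.1 = 0 := by
                intro s hs
                have hsum0 : ∑ t ∈ Finset.range k, vt t l.1 = 0 := hup l
                exact (Finset.sum_eq_zero_iff_of_nonneg (fun t _ => hvtnn t l.1)).mp hsum0 s
                  (Finset.mem_range.mpr hs)
              intro s
              rw [per_mod (fun s => vt s l.1) k (fun s => congrFun (hvtper s) l.1) s]
              exact hlt _ (Nat.mod_lt _ hkpos)
            show vt (t + 1) l.1 - vt t l.1 = 0
            rw [hvtz, hvtz, sub_self]
          · push_neg at hup
            obtain ⟨i₀, hi₀⟩ := hup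
            have hi₀pos : 0 < u i₀.1 := lt_of_le_of_ne (hunn i₀.1) (Ne.symm hi₀)
            have hrpos : ∀ j : {l : Fin n // c l = p}, 0 < u j.1 := by
              intro j
              have h1 : (M₀ ^ t₀).mulVec u j.1 = lam ^ t₀ * u j.1 := by
                rw [hMtu t₀]; rfl
              have h2 : (M₀ ^ t₀) j.1 i₀.1 * u i₀.1 ≤ (M₀ ^ t₀).mulVec u j.1 :=
                Finset.single_le_sum (f := fun l => (M₀ ^ t₀) j.1 l * u l)
                  (fun l _ => mul_nonneg (hMnn t₀ j.1 l) (hunn l)) (Finset.mem_univ i₀.1)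
              have h3 : 0 < (M₀ ^ t₀) j.1 i₀.1 := by
                rw [← hdiagEq t₀ j i₀]; exact ht₀ j i₀
              have h4 : 0 < lam ^ t₀ := pow_pos hlam0 t₀
              nlinarith
            have hAnn : ∀ a b, 0 ≤ (lam⁻¹ • B) a b := by
              intro a b
              rw [Matrix.smul_apply, smul_eq_mul, hBentry]
              exact mul_nonneg (by positivity) (hM0nn a.1 b.1)
            have hApos : ∀ a b, 0 < ((lam⁻¹ • B) ^ t₀) a b := by
              intro a b
              rw [smul_pow, Matrix.smul_apply, smul_eq_mul]
              have h6 : 0 < (B ^ t₀) a b := ht₀ a b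
              positivity
            have hAr : ∀ j, (lam⁻¹ • B).mulVec (fun l : {l : Fin n // c l = p} => u l.1) j
                ≤ u j.1 := by
              intro j
              have hsub : ∑ l : {l : Fin n // c l = p}, M₀ j.1 l.1 * u l.1
                  ≤ ∑ l, M₀ j.1 l * u l := by
                rw [← Finset.sum_subtype (Finset.univ.filter (fun l => c l = p)) (by simp)
                  (fun l => M₀ j.1 l * u l)]
                exact Finset.sum_le_sum_of_subset_of_nonneg (Finset.filter_subset _ _)
                  (fun l _ _ => mul_nonneg (hM0nn j.1 l) (hunn l))
              have h2 : ∑ l, M₀ j.1 l * u l = lam * u j.1 := congrFun hMu j.1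
              have h4 : (B.mulVec (fun l : {l : Fin n // c l = p} => u l.1)) j
                  ≤ lam * u j.1 := by
                have h4' : (B.mulVec (fun l : {l : Fin n // c l = p} => u l.1)) j
                    = ∑ l : {l : Fin n // c l = p}, M₀ j.1 l.1 * u l.1 := rfl
                rw [h4']
                linarith
              have h5 : ((lam⁻¹ • B).mulVec (fun l : {l : Fin n // c l = p} => u l.1)) j
                  = lam⁻¹ * (B.mulVec (fun l : {l : Fin n // c l = p} => u l.1)) j := by
                rw [Matrix.smul_mulVec]; rfl
              rw [h5]
              calc lam⁻¹ * (B.mulVec (fun l : {l : Fin n // c l = p} => u l.1)) j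
                  ≤ lam⁻¹ * (lam * u j.1) := mul_le_mul_of_nonneg_left h4 (by positivity)
                _ = u j.1 := by field_simp
            exact hopf_kill (lam⁻¹ • B) hAnn t₀ hApos (fun l => u l.1) hrpos hAr k hk E
              hrecE hperE hsumE
        · obtain ⟨C, hC⟩ := hpb
          have hBnn : ∀ s, 1 ≤ s → ∀ a b, 0 ≤ (B ^ s) a b := by
            intro s _ a b
            rw [hdiagEq s a b]
            exact hMnn s a.1 b.1
          have hrecE' : ∀ t, E (t + 1) = lam⁻¹ • B.mulVec (E t) := by
            intro t
            rw [hrecE t, Matrix.smul_mulVec]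
          exact fun t l => pb_kill B hBnn C hC lam hlam k hk E hrecE' hperE t l
      intro t i hi
      exact hEzero t ⟨i, hi⟩
  have hd0 : ∀ i, d 0 i = 0 := fun i => main ((c i) : ℕ) (c i) rfl 0 i rfl
  refine ⟨lam, ?_⟩
  have h1 : vt 1 = vt 0 := by
    funext i
    have h2 : vt (0 + 1) i - vt 0 i = 0 := hd0 i
    have h3 : (0:ℕ) + 1 = 1 := rfl
    rw [h3] at h2
    linarith
  have h4 : lam⁻¹ • M₀.mulVec v = v := by
    rw [← hvt0, ← hvtsucc 0, Nat.zero_add, h1]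
  calc M₀.mulVec v = lam • (lam⁻¹ • M₀.mulVec v) := by
        rw [smul_smul, mul_inv_cancel₀ (ne_of_gt hlam0), one_smul]
    _ = lam • v := by rw [h4]
end
end
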